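/- arXiv:1309.5354 — 8 statements merged into one kernel-verified Lean document; each statement's English description precedes it below -/
import Mathlib

section
/- Let Γ be a group, Γ₀ ≤ Γ a subgroup, and Γ₁ ≤ Γ a torsion-free subgroup. Let F be a finite nonempty subset of the coset space Γ/Γ₀ such that g⁻¹Γ₁g ∩ Γ₀ = {e} for every coset gΓ₀ ∈ F. Then the setwise stabilizer {h ∈ Γ₁ : h • F = F} of F under the left-translation action of Γ₁ on Γ/Γ₀ is the trivial subgroup {e}. -/
open Pointwise

/-- Let `Γ` be a group, `Γ₀ ≤ Γ` a subgroup and `Γ₁ ≤ Γ` a torsion-free subgroup.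
If `F` is a finite nonempty subset of `Γ/Γ₀` such that `g⁻¹ Γ₁ g ∩ Γ₀ = {e}` for
every coset `gΓ₀ ∈ F`, then the setwise stabilizer of `F` in `Γ₁` is trivial. -/
theorem stmt0 {Γ : Type*} [Group Γ] (Γ₀ Γ₁ : Subgroup Γ)
    (hΓ₁ : ∀ g : Γ₁, g ≠ 1 → ¬IsOfFinOrder g)
    (F : Set (Γ ⧸ Γ₀)) (hFfin : F.Finite) (hFne : F.Nonempty)
    (htriv : ∀ g : Γ, (g : Γ ⧸ Γ₀) ∈ F → ∀ h ∈ Γ₁, g⁻¹ * h * g ∈ Γ₀ → h = 1) :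
    ∀ h ∈ Γ₁, h • F = F → h = 1 := by
  intro h hh hF
  have hpow : ∀ n : ℕ, h ^ n • F = F := by
    intro n
    induction n with
    | zero => simp
    | succ n ih => rw [pow_succ, mul_smul, hF, ih]
  obtain ⟨x, hx⟩ := hFne
  obtain ⟨g, rfl⟩ := QuotientGroup.mk_surjective x
  have hmem : ∀ n : ℕ, h ^ n • (g : Γ ⧸ Γ₀) ∈ F := fun n => by
    rw [← hpow n]; exact Set.smul_mem_smul_set hx
  haveI := hFfin.to_subtype
  obtain ⟨m, n, hne, hmn⟩ := Finite.exists_ne_map_eq_of_infinite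
    (fun n : ℕ => (⟨h ^ n • (g : Γ ⧸ Γ₀), hmem n⟩ : F))
  simp only [Subtype.mk.injEq] at hmn
  wlog hlt : n < m generalizing m n
  · exact this n m (Ne.symm hne) hmn.symm (lt_of_le_of_ne (not_lt.mp hlt) hne)
  have hfix : h ^ (m - n) • (g : Γ ⧸ Γ₀) = (g : Γ ⧸ Γ₀) := by
    have h1 : (h ^ n * h ^ (m - n)) • (g : Γ ⧸ Γ₀) = h ^ n • (g : Γ ⧸ Γ₀) := by
      rw [← pow_add, Nat.add_sub_cancel' hlt.le]; exact hmn
    rw [mul_smul] at h1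
    exact smul_left_cancel _ h1
  have hk : 0 < m - n := Nat.sub_pos_of_lt hlt
  have hHn : h ^ (m - n) = 1 := by
    apply htriv g hx (h ^ (m - n)) (pow_mem hh _)
    have := QuotientGroup.eq.mp hfix.symm
    simpa [mul_assoc] using this
  by_contra hne1
  have horder : IsOfFinOrder (⟨h, hh⟩ : Γ₁) := by
    refine isOfFinOrder_iff_pow_eq_one.mpr ⟨m - n, hk, ?_⟩
    ext
    simpa using hHn
  exact hΓ₁ ⟨h, hh⟩ (fun he => hne1 (by simpa using congrArg Subtype.val he)) horder
end

section
/- Let n ≥ 2 be an integer and m ≥ 3 a prime number, and let Γ = (ℤ/nℤ) ∗ (ℤ/mℤ) be the free product, with a and b the canonical generators of the two free factors. Then the element ab has infinite order in Γ and the cyclic subgroup Γ₀ = ⟨ab⟩ is malnormal in Γ. -/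
open Monoid Coprod

set_option linter.unusedSectionVars false

namespace Malnorm

variable {A B : Type} [Group A] [Group B] [DecidableEq A] [DecidableEq B]

abbrev Letter (A B : Type) := A ⊕ B

def ok : Letter A B → Prop := fun x => match x with
  | .inl y => y ≠ 1
  | .inr y => y ≠ 1

def Red (w : List (Letter A B)) : Prop :=
  (∀ x ∈ w, ok x) ∧ List.Chain' (fun p q => p.isLeft ≠ q.isLeft) w

theorem Red.nil : Red ([] : List (Letter A B)) := ⟨by simp, List.isChain_nil⟩

theorem Red.tail {x : Letter A B} {t} (h : Red (x :: t)) : Red t :=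
  ⟨fun y hy => h.1 y (List.mem_cons_of_mem _ hy), h.2.tail⟩

theorem Red.head_ok {x : Letter A B} {t} (h : Red (x :: t)) : ok x :=
  h.1 x List.mem_cons_self

/-- after an `inl` letter comes `[]` or an `inr` letter -/
theorem Red.after_inl {y : A} {t : List (Letter A B)} (h : Red (Sum.inl y :: t)) :
    t = [] ∨ ∃ z t', t = Sum.inr z :: t' := by
  rcases t with _ | ⟨x, t'⟩
  · exact Or.inl rfl
  · rcases x with z | z
    · exact absurd (List.isChain_cons_cons.1 h.2).1 (by simp)
    · exact Or.inr ⟨z, t', rfl⟩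

theorem Red.after_inr {y : B} {t : List (Letter A B)} (h : Red (Sum.inr y :: t)) :
    t = [] ∨ ∃ z t', t = Sum.inl z :: t' := by
  rcases t with _ | ⟨x, t'⟩
  · exact Or.inl rfl
  · rcases x with z | z
    · exact Or.inr ⟨z, t', rfl⟩
    · exact absurd (List.isChain_cons_cons.1 h.2).1 (by simp)

theorem Red.cons_inl_inr {y : A} {z : B} {t : List (Letter A B)} (hy : y ≠ 1) (hz : z ≠ 1)
    (h : Red (Sum.inr z :: t)) : Red (Sum.inl y :: Sum.inr z :: t) := by
  refine ⟨?_, List.isChain_cons_cons.2 ⟨by simp, h.2⟩⟩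
  intro x hx
  rcases List.mem_cons.1 hx with rfl | hx
  · exact hy
  · exact h.1 x hx

theorem Red.cons_inr_inl {y : B} {z : A} {t : List (Letter A B)} (hy : y ≠ 1) (hz : z ≠ 1)
    (h : Red (Sum.inl z :: t)) : Red (Sum.inr y :: Sum.inl z :: t) := by
  refine ⟨?_, List.isChain_cons_cons.2 ⟨by simp, h.2⟩⟩
  intro x hx
  rcases List.mem_cons.1 hx with rfl | hx
  · exact hy
  · exact h.1 x hx

theorem Red.singleton_inl {y : A} (hy : y ≠ 1) : Red ([Sum.inl y] : List (Letter A B)) :=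
  ⟨by simpa [ok] using hy, List.isChain_singleton _⟩

theorem Red.singleton_inr {y : B} (hy : y ≠ 1) : Red ([Sum.inr y] : List (Letter A B)) :=
  ⟨by simpa [ok] using hy, List.isChain_singleton _⟩

def preL (x : A) : List (Letter A B) → List (Letter A B)
  | [] => if x = 1 then [] else [Sum.inl x]
  | Sum.inl y :: t => if x * y = 1 then t else Sum.inl (x * y) :: t
  | Sum.inr y :: t => if x = 1 then Sum.inr y :: t else Sum.inl x :: Sum.inr y :: t

def preR (x : B) : List (Letter A B) → List (Letter A B)
  | [] => if x = 1 then [] else [Sum.inr x]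
  | Sum.inr y :: t => if x * y = 1 then t else Sum.inr (x * y) :: t
  | Sum.inl y :: t => if x = 1 then Sum.inl y :: t else Sum.inr x :: Sum.inl y :: t

@[simp] theorem preL_nil (x : A) :
    preL x ([] : List (Letter A B)) = if x = 1 then [] else [Sum.inl x] := rfl
@[simp] theorem preL_inl (x y : A) (t : List (Letter A B)) :
    preL x (Sum.inl y :: t) = if x * y = 1 then t else Sum.inl (x * y) :: t := rfl
@[simp] theorem preL_inr (x : A) (y : B) (t : List (Letter A B)) :
    preL x (Sum.inr y :: t) = if x = 1 then Sum.inr y :: t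
      else Sum.inl x :: Sum.inr y :: t := rfl
@[simp] theorem preR_nil (x : B) :
    preR x ([] : List (Letter A B)) = if x = 1 then [] else [Sum.inr x] := rfl
@[simp] theorem preR_inr (x y : B) (t : List (Letter A B)) :
    preR x (Sum.inr y :: t) = if x * y = 1 then t else Sum.inr (x * y) :: t := rfl
@[simp] theorem preR_inl (x : B) (y : A) (t : List (Letter A B)) :
    preR x (Sum.inl y :: t) = if x = 1 then Sum.inl y :: t
      else Sum.inr x :: Sum.inl y :: t := rfl

theorem red_preL (x : A) {w : List (Letter A B)} (h : Red w) : Red (preL x w) := by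
  rcases w with _ | ⟨z | z, t⟩
  · rw [preL_nil]; split_ifs with h1
    · exact Red.nil
    · exact Red.singleton_inl h1
  · rw [preL_inl]; split_ifs with h1
    · exact h.tail
    · rcases h.after_inl with rfl | ⟨z', t', rfl⟩
      · exact Red.singleton_inl h1
      · exact Red.cons_inl_inr h1 (by simpa [ok] using h.tail.head_ok) h.tail
  · rw [preL_inr]; split_ifs with h1
    · exact h
    · exact Red.cons_inl_inr h1 (by simpa [ok] using h.head_ok) h

theorem red_preR (x : B) {w : List (Letter A B)} (h : Red w) : Red (preR x w) := by
  rcases w with _ | ⟨z | z, t⟩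
  · rw [preR_nil]; split_ifs with h1
    · exact Red.nil
    · exact Red.singleton_inr h1
  · rw [preR_inl]; split_ifs with h1
    · exact h
    · exact Red.cons_inr_inl h1 (by simpa [ok] using h.head_ok) h
  · rw [preR_inr]; split_ifs with h1
    · exact h.tail
    · rcases h.after_inr with rfl | ⟨z', t', rfl⟩
      · exact Red.singleton_inr h1
      · exact Red.cons_inr_inl h1 (by simpa [ok] using h.tail.head_ok) h.tail

theorem preL_one {w : List (Letter A B)} (h : Red w) : preL (1 : A) w = w := by
  rcases w with _ | ⟨z | z, t⟩
  · simp
  · have : z ≠ 1 := by simpa [ok] using h.head_ok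
    simp [this]
  · simp

theorem preR_one {w : List (Letter A B)} (h : Red w) : preR (1 : B) w = w := by
  rcases w with _ | ⟨z | z, t⟩
  · simp
  · simp
  · have : z ≠ 1 := by simpa [ok] using h.head_ok
    simp [this]

theorem preL_mul (x x' : A) {w : List (Letter A B)} (h : Red w) :
    preL (x * x') w = preL x (preL x' w) := by
  rcases w with _ | ⟨z | z, t⟩
  · by_cases h1 : x' = 1
    · subst h1; rw [preL_one Red.nil, mul_one]
    · by_cases h2 : x * x' = 1 <;> simp [h1, h2]
  · by_cases h1 : x' * z = 1
    · have hx : x * x' * z = x := by rw [mul_assoc, h1, mul_one]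
      rcases h.after_inl with rfl | ⟨z', t', rfl⟩ <;>
        simp only [preL_inl, if_pos h1, hx, preL_nil, preL_inr] <;>
        by_cases h2 : x = 1 <;> simp [h2]
    · by_cases h2 : x * (x' * z) = 1 <;> simp [h1, h2, mul_assoc]
  · by_cases h1 : x' = 1
    · subst h1; rw [preL_one h, mul_one]
    · by_cases h2 : x * x' = 1 <;> simp [h1, h2]

theorem preR_mul (x x' : B) {w : List (Letter A B)} (h : Red w) :
    preR (x * x') w = preR x (preR x' w) := by
  rcases w with _ | ⟨z | z, t⟩
  · by_cases h1 : x' = 1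
    · subst h1; rw [preR_one Red.nil, mul_one]
    · by_cases h2 : x * x' = 1 <;> simp [h1, h2]
  · by_cases h1 : x' = 1
    · subst h1; rw [preR_one h, mul_one]
    · by_cases h2 : x * x' = 1 <;> simp [h1, h2]
  · by_cases h1 : x' * z = 1
    · have hx : x * x' * z = x := by rw [mul_assoc, h1, mul_one]
      rcases h.after_inr with rfl | ⟨z', t', rfl⟩ <;>
        simp only [preR_inr, if_pos h1, hx, preR_nil, preR_inl] <;>
        by_cases h2 : x = 1 <;> simp [h2]
    · by_cases h2 : x * (x' * z) = 1 <;> simp [h1, h2, mul_assoc]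

/-! ### The action on reduced words and normal forms -/

def X (A B : Type) [Group A] [Group B] := {w : List (Letter A B) // Red w}

def permL (x : A) : Equiv.Perm (X A B) where
  toFun w := ⟨preL x w.1, red_preL x w.2⟩
  invFun w := ⟨preL x⁻¹ w.1, red_preL _ w.2⟩
  left_inv w := Subtype.ext <| by
    simp only [← preL_mul _ _ w.2, inv_mul_cancel, preL_one w.2]
  right_inv w := Subtype.ext <| by
    simp only [← preL_mul _ _ w.2, mul_inv_cancel, preL_one w.2]

def permR (x : B) : Equiv.Perm (X A B) where
  toFun w := ⟨preR x w.1, red_preR x w.2⟩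
  invFun w := ⟨preR x⁻¹ w.1, red_preR _ w.2⟩
  left_inv w := Subtype.ext <| by
    simp only [← preR_mul _ _ w.2, inv_mul_cancel, preR_one w.2]
  right_inv w := Subtype.ext <| by
    simp only [← preR_mul _ _ w.2, mul_inv_cancel, preR_one w.2]

def homL : A →* Equiv.Perm (X A B) where
  toFun := permL
  map_one' := Equiv.ext fun w => Subtype.ext (preL_one w.2)
  map_mul' x y := Equiv.ext fun w => Subtype.ext (preL_mul x y w.2)

def homR : B →* Equiv.Perm (X A B) where
  toFun := permR
  map_one' := Equiv.ext fun w => Subtype.ext (preR_one w.2)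
  map_mul' x y := Equiv.ext fun w => Subtype.ext (preR_mul x y w.2)

def Phi : Monoid.Coprod A B →* Equiv.Perm (X A B) := Coprod.lift homL homR

@[simp] theorem Phi_inl (x : A) : (Phi (Coprod.inl x : Monoid.Coprod A B)) = (homL x : Equiv.Perm (X A B)) :=
  Coprod.lift_apply_inl homL homR x

@[simp] theorem Phi_inr (x : B) : (Phi (Coprod.inr x : Monoid.Coprod A B)) = (homR x : Equiv.Perm (X A B)) :=
  Coprod.lift_apply_inr homL homR x

def nf (g : Monoid.Coprod A B) : List (Letter A B) := (Phi g ⟨[], Red.nil⟩).1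

theorem red_nf (g : Monoid.Coprod A B) : Red (nf g) := (Phi g ⟨[], Red.nil⟩).2

theorem nf_one : nf (1 : Monoid.Coprod A B) = [] := by simp [nf]; rfl

theorem nf_mul (g h : Monoid.Coprod A B) :
    nf (g * h) = (Phi g ⟨nf h, red_nf h⟩).1 := by
  rw [nf, map_mul]; rfl

theorem nf_inl_mul (x : A) (g : Monoid.Coprod A B) :
    nf (Coprod.inl x * g) = preL x (nf g) := by
  rw [nf_mul, Phi_inl]; rfl

theorem nf_inr_mul (x : B) (g : Monoid.Coprod A B) :
    nf (Coprod.inr x * g) = preR x (nf g) := by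
  rw [nf_mul, Phi_inr]; rfl

def emb (w : List (Letter A B)) : Monoid.Coprod A B :=
  (w.map (Sum.elim (fun y => Coprod.inl y) (fun y => Coprod.inr y))).prod

@[simp] theorem emb_nil : emb ([] : List (Letter A B)) = 1 := rfl

@[simp] theorem emb_cons (x : Letter A B) (t : List (Letter A B)) :
    emb (x :: t) = Sum.elim (fun y => (Coprod.inl y : Monoid.Coprod A B))
      (fun y => Coprod.inr y) x * emb t := by
  simp [emb]

theorem emb_append (u v : List (Letter A B)) : emb (u ++ v) = emb u * emb v := by
  simp [emb]

theorem emb_preL (x : A) {w : List (Letter A B)} (h : Red w) :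
    emb (preL x w) = Coprod.inl x * emb w := by
  rcases w with _ | ⟨z | z, t⟩
  · by_cases h1 : x = 1 <;> simp [h1]
  · by_cases h1 : x * z = 1
    · rw [preL_inl, if_pos h1, emb_cons]
      simp only [Sum.elim_inl, ← mul_assoc, ← map_mul, h1, map_one, one_mul]
    · rw [preL_inl, if_neg h1, emb_cons, emb_cons]
      simp only [Sum.elim_inl, ← mul_assoc, ← map_mul]
  · by_cases h1 : x = 1 <;> simp [h1]

theorem emb_preR (x : B) {w : List (Letter A B)} (h : Red w) :
    emb (preR x w) = Coprod.inr x * emb w := by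
  rcases w with _ | ⟨z | z, t⟩
  · by_cases h1 : x = 1 <;> simp [h1]
  · by_cases h1 : x = 1 <;> simp [h1]
  · by_cases h1 : x * z = 1
    · rw [preR_inr, if_pos h1, emb_cons]
      simp only [Sum.elim_inr, ← mul_assoc, ← map_mul, h1, map_one, one_mul]
    · rw [preR_inr, if_neg h1, emb_cons, emb_cons]
      simp only [Sum.elim_inr, ← mul_assoc, ← map_mul]

theorem emb_Phi (g : Monoid.Coprod A B) : ∀ w : X A B, emb ((Phi g w).1) = g * emb w.1 := by
  induction g using Coprod.induction_on with
  | inl x => intro w; rw [Phi_inl]; exact emb_preL x w.2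
  | inr x => intro w; rw [Phi_inr]; exact emb_preR x w.2
  | mul g h ihg ihh =>
    intro w
    rw [map_mul]
    calc emb (((Phi g) ((Phi h) w)).1) = g * emb ((Phi h w).1) := ihg _
    _ = g * (h * emb w.1) := by rw [ihh w]
    _ = g * h * emb w.1 := by rw [mul_assoc]

theorem emb_nf (g : Monoid.Coprod A B) : emb (nf g) = g := by
  simpa [nf] using emb_Phi g ⟨[], Red.nil⟩

theorem nf_injective {g h : Monoid.Coprod A B} (e : nf g = nf h) : g = h := by
  rw [← emb_nf g, ← emb_nf h, e]

theorem nf_emb : ∀ {w : List (Letter A B)}, Red w → nf (emb w) = w := by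
  intro w
  induction w with
  | nil => intro _; simpa using nf_one
  | cons x t ih =>
    intro h
    have ht := ih h.tail
    rcases x with y | y
    · have hy : y ≠ 1 := by simpa [ok] using h.head_ok
      rw [emb_cons, Sum.elim_inl, nf_inl_mul, ht]
      rcases h.after_inl with rfl | ⟨z, t', rfl⟩ <;> simp [hy]
    · have hy : y ≠ 1 := by simpa [ok] using h.head_ok
      rw [emb_cons, Sum.elim_inr, nf_inr_mul, ht]
      rcases h.after_inr with rfl | ⟨z, t', rfl⟩ <;> simp [hy]

/-! ### Inversion and reversal -/

def linv : Letter A B → Letter A B := Sum.map (·⁻¹) (·⁻¹)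

def ri (w : List (Letter A B)) : List (Letter A B) := (w.map linv).reverse

theorem red_ri {w : List (Letter A B)} (h : Red w) : Red (ri w) := by
  refine ⟨?_, ?_⟩
  · intro x hx
    rw [ri, List.mem_reverse, List.mem_map] at hx
    obtain ⟨y, hy, rfl⟩ := hx
    have := h.1 y hy
    rcases y with y | y <;> simpa [linv, ok] using this
  · rw [ri, List.Chain', List.isChain_reverse, List.isChain_map]
    refine (show List.IsChain _ w from h.2).imp ?_
    intro p q hpq
    rcases p with p | p <;> rcases q with q | q <;> simp_all [linv, flip]

theorem emb_ri : ∀ w : List (Letter A B), emb (ri w) = (emb w)⁻¹ := by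
  intro w
  induction w with
  | nil => simp [ri]
  | cons x t ih =>
    have : ri (x :: t) = ri t ++ [linv x] := by simp [ri]
    rw [this, emb_append, ih]
    rcases x with y | y <;> simp [linv, emb, mul_inv_rev]

theorem nf_inv (g : Monoid.Coprod A B) : nf g⁻¹ = ri (nf g) := by
  have := nf_emb (red_ri (red_nf g))
  rwa [emb_ri, emb_nf] at this

/-! ### Words of powers of `c = inl a * inr b` -/

variable (a : A) (b : B)

def Pw (i : ℕ) : List (Letter A B) := (List.replicate i [Sum.inl a, Sum.inr b]).flatten

def Qw (i : ℕ) : List (Letter A B) := (List.replicate i [Sum.inr b⁻¹, Sum.inl a⁻¹]).flatten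

@[simp] theorem Pw_zero : Pw a b 0 = [] := rfl
@[simp] theorem Qw_zero : Qw a b 0 = [] := rfl

theorem Pw_succ (i : ℕ) : Pw a b (i+1) = Sum.inl a :: Sum.inr b :: Pw a b i := by
  rw [Pw, List.replicate_succ]; rfl

theorem Qw_succ (i : ℕ) : Qw a b (i+1) = Sum.inr b⁻¹ :: Sum.inl a⁻¹ :: Qw a b i := by
  rw [Qw, List.replicate_succ]; rfl

theorem Pw_add (i j : ℕ) : Pw a b (i + j) = Pw a b i ++ Pw a b j := by
  induction i with
  | zero => simp
  | succ s ih => rw [show s+1+j = (s+j)+1 by omega, Pw_succ, Pw_succ, ih]; rfl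

theorem Qw_add (i j : ℕ) : Qw a b (i + j) = Qw a b i ++ Qw a b j := by
  induction i with
  | zero => simp
  | succ s ih => rw [show s+1+j = (s+j)+1 by omega, Qw_succ, Qw_succ, ih]; rfl

theorem Pw_succ' (i : ℕ) : Pw a b (i+1) = Pw a b i ++ [Sum.inl a, Sum.inr b] := by
  rw [Pw_add]; rfl

@[simp] theorem length_Pw (i : ℕ) : (Pw a b i).length = 2 * i := by
  induction i with
  | zero => rfl
  | succ j ih => rw [Pw_succ]; simp [ih]; omega

@[simp] theorem length_Qw (i : ℕ) : (Qw a b i).length = 2 * i := by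
  induction i with
  | zero => rfl
  | succ j ih => rw [Qw_succ]; simp [ih]; omega

theorem ri_cons (x : Letter A B) (t : List (Letter A B)) : ri (x :: t) = ri t ++ [linv x] := by
  simp [ri]

theorem ri_Qw (i : ℕ) : ri (Qw a b i) = Pw a b i := by
  induction i with
  | zero => simp [ri, Qw, Pw]
  | succ j ih =>
    rw [Qw_succ, ri_cons, ri_cons, ih, Pw_succ']
    simp [linv]

theorem ri_append (u v : List (Letter A B)) : ri (u ++ v) = ri v ++ ri u := by
  simp [ri]

theorem dropPw (s e : ℕ) : (Pw a b (s + e)).drop (2 * s) = Pw a b e := by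
  rw [Pw_add, ← length_Pw a b s, List.drop_left]

theorem dropPw_odd (s e : ℕ) : (Pw a b (s + 1 + e)).drop (2 * s + 1) = Sum.inr b :: Pw a b e := by
  have h1 : s + 1 + e = s + (1 + e) := by omega
  rw [h1, Pw_add]
  rw [show 2 * s + 1 = (Pw a b s).length + 1 by simp]
  rw [List.drop_length_add_append]
  rw [show 1 + e = e + 1 by omega, Pw_succ]
  rfl

theorem dropQw (s e : ℕ) : (Qw a b (s + e)).drop (2 * s) = Qw a b e := by
  rw [Qw_add, ← length_Qw a b s, List.drop_left]

theorem dropQw_odd (s e : ℕ) : (Qw a b (s + 1 + e)).drop (2 * s + 1) = Sum.inl a⁻¹ :: Qw a b e := by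
  have h1 : s + 1 + e = s + (1 + e) := by omega
  rw [h1, Qw_add]
  rw [show 2 * s + 1 = (Qw a b s).length + 1 by simp]
  rw [List.drop_length_add_append]
  rw [show 1 + e = e + 1 by omega, Qw_succ]
  rfl

theorem dropPw' (s e : ℕ) (hse : s ≤ e) : (Pw a b e).drop (2*s) = Pw a b (e - s) := by
  rw [show e = s + (e - s) by omega, dropPw]
  congr 1
  omega

theorem dropPw_odd' (s e : ℕ) (hse : s + 1 ≤ e) :
    (Pw a b e).drop (2*s+1) = Sum.inr b :: Pw a b (e - s - 1) := by
  rw [show e = s + 1 + (e - s - 1) by omega, dropPw_odd]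
  congr 2
  omega

theorem dropQw' (s e : ℕ) (hse : s ≤ e) : (Qw a b e).drop (2*s) = Qw a b (e - s) := by
  rw [show e = s + (e - s) by omega, dropQw]
  congr 1
  omega

theorem dropQw_odd' (s e : ℕ) (hse : s + 1 ≤ e) :
    (Qw a b e).drop (2*s+1) = Sum.inl a⁻¹ :: Qw a b (e - s - 1) := by
  rw [show e = s + 1 + (e - s - 1) by omega, dropQw_odd]
  congr 2
  omega

/-! ### The element `c` and stabilization -/

def cel : Monoid.Coprod A B := Coprod.inl a * Coprod.inr b

theorem nf_cel_mul (h : Monoid.Coprod A B) :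
    nf (cel a b * h) = preL a (preR b (nf h)) := by
  rw [cel, mul_assoc, nf_inl_mul, nf_inr_mul]

theorem cel_inv : (cel a b)⁻¹ = Coprod.inr b⁻¹ * Coprod.inl a⁻¹ := by
  rw [cel, mul_inv_rev, ← map_inv, ← map_inv]

theorem nf_cel_inv_mul (h : Monoid.Coprod A B) :
    nf ((cel a b)⁻¹ * h) = preR b⁻¹ (preL a⁻¹ (nf h)) := by
  rw [cel_inv, mul_assoc, nf_inr_mul, nf_inl_mul]

variable {a b}

theorem pre_c_inl (ha : a ≠ 1) (hb : b ≠ 1) (y : A) (t : List (Letter A B)) :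
    preL a (preR b (Sum.inl y :: t)) = Sum.inl a :: Sum.inr b :: Sum.inl y :: t := by
  simp [ha, hb]

theorem pre_cinv_inr (ha : a ≠ 1) (hb : b ≠ 1) (y : B) (t : List (Letter A B)) :
    preR b⁻¹ (preL a⁻¹ (Sum.inr y :: t)) = Sum.inr b⁻¹ :: Sum.inl a⁻¹ :: Sum.inr y :: t := by
  simp [inv_ne_one.2 ha, inv_ne_one.2 hb]

theorem stabA (ha : a ≠ 1) (hb : b ≠ 1) (g : Monoid.Coprod A B)
    (hg : ∃ y t, nf g = Sum.inl y :: t) :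
    ∀ i, nf ((cel a b) ^ i * g) = Pw a b i ++ nf g := by
  intro i
  induction i with
  | zero => simp
  | succ j ihj =>
    have h1 : (cel a b)^(j+1) * g = cel a b * ((cel a b)^j * g) := by
      rw [pow_succ']; rw [mul_assoc]
    rw [h1, nf_cel_mul, ihj]
    rcases j with _ | s
    · obtain ⟨y, t, hyt⟩ := hg
      simp only [Pw_zero, List.nil_append, hyt]
      rw [pre_c_inl ha hb, Pw_succ]
      simp
    · rw [Pw_succ, List.cons_append, List.cons_append, pre_c_inl ha hb, Pw_succ, Pw_succ]
      simp

theorem stabQ (ha : a ≠ 1) (hb : b ≠ 1) (g : Monoid.Coprod A B)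
    (hg : ∃ y t, nf g = Sum.inr y :: t) :
    ∀ i, nf ((cel a b)⁻¹ ^ i * g) = Qw a b i ++ nf g := by
  intro i
  induction i with
  | zero => simp
  | succ j ihj =>
    have h1 : (cel a b)⁻¹^(j+1) * g = (cel a b)⁻¹ * ((cel a b)⁻¹^j * g) := by
      rw [pow_succ']; rw [mul_assoc]
    rw [h1, nf_cel_inv_mul, ihj]
    rcases j with _ | s
    · obtain ⟨y, t, hyt⟩ := hg
      simp only [Qw_zero, List.nil_append, hyt]
      rw [pre_cinv_inr ha hb, Qw_succ]
      simp
    · rw [Qw_succ, List.cons_append, List.cons_append, pre_cinv_inr ha hb, Qw_succ, Qw_succ]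
      simp

/-! ### Normal forms of powers of `c` -/

theorem nf_inl {x : A} (hx : x ≠ 1) : nf (Coprod.inl x : Monoid.Coprod A B) = [Sum.inl x] := by
  rw [show (Coprod.inl x : Monoid.Coprod A B) = Coprod.inl x * 1 by rw [mul_one],
    nf_inl_mul, nf_one]
  simp [hx]

theorem nf_inr {x : B} (hx : x ≠ 1) : nf (Coprod.inr x : Monoid.Coprod A B) = [Sum.inr x] := by
  rw [show (Coprod.inr x : Monoid.Coprod A B) = Coprod.inr x * 1 by rw [mul_one],
    nf_inr_mul, nf_one]
  simp [hx]

theorem nf_cel (ha : a ≠ 1) (hb : b ≠ 1) : nf (cel a b) = [Sum.inl a, Sum.inr b] := by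
  rw [cel, nf_inl_mul, nf_inr hb]
  simp [ha]

theorem nf_cel_inv (ha : a ≠ 1) (hb : b ≠ 1) :
    nf ((cel a b)⁻¹) = [Sum.inr b⁻¹, Sum.inl a⁻¹] := by
  rw [cel_inv, nf_inr_mul, nf_inl (inv_ne_one.2 ha)]
  simp [inv_ne_one.2 hb]

theorem nf_cel_pow (ha : a ≠ 1) (hb : b ≠ 1) (i : ℕ) :
    nf ((cel a b) ^ i) = Pw a b i := by
  rcases i with _ | j
  · simpa using nf_one
  · rw [pow_succ, stabA ha hb _ ⟨a, [Sum.inr b], nf_cel ha hb⟩ j, nf_cel ha hb, Pw_succ']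

theorem nf_cel_inv_pow (ha : a ≠ 1) (hb : b ≠ 1) (i : ℕ) :
    nf ((cel a b)⁻¹ ^ i) = Qw a b i := by
  rcases i with _ | j
  · simpa using nf_one
  · rw [pow_succ, stabQ ha hb _ ⟨b⁻¹, [Sum.inl a⁻¹], nf_cel_inv ha hb⟩ j, nf_cel_inv ha hb]
    rw [show j+1 = j+1 from rfl, Qw_add]
    rfl

/-! ### Escape lemmas -/

theorem reachA (ha : a ≠ 1) (hb : b ≠ 1) :
    ∀ (N : ℕ) (g : Monoid.Coprod A B), (nf g).length ≤ N →
    ∃ (j₀ : ℕ) (v : List (Letter A B)),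
      (v = [] ∨ ∃ y t, v = Sum.inl y :: t) ∧
      ∀ i, nf ((cel a b) ^ (j₀ + i) * g) = Pw a b i ++ v := by
  intro N
  induction N with
  | zero =>
    intro g hg
    have hgnil : nf g = [] := List.length_eq_zero_iff.1 (Nat.le_zero.1 hg)
    have hg1 : g = 1 := nf_injective (by rw [hgnil, nf_one])
    exact ⟨0, [], Or.inl rfl, fun i => by
      rw [hg1, mul_one, Nat.zero_add, nf_cel_pow ha hb, List.append_nil]⟩
  | succ N ih =>
    intro g hg
    rcases hnf : nf g with _ | ⟨x, t⟩
    · have hg1 : g = 1 := nf_injective (by rw [hnf, nf_one])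
      exact ⟨0, [], Or.inl rfl, fun i => by
        rw [hg1, mul_one, Nat.zero_add, nf_cel_pow ha hb, List.append_nil]⟩
    · rcases x with y | y
      · exact ⟨0, nf g, Or.inr ⟨y, t, hnf⟩, fun i => by
          rw [Nat.zero_add]; exact stabA ha hb g ⟨y, t, hnf⟩ i⟩
      · have hred : Red (Sum.inr y :: t) := hnf ▸ red_nf g
        by_cases hby : b * y = 1
        · rcases hred.after_inr with rfl | ⟨z, t', rfl⟩
          · have hcg : nf (cel a b * g) = [Sum.inl a] := by
              rw [nf_cel_mul, hnf]; simp [hby, ha]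
            refine ⟨1, [Sum.inl a], Or.inr ⟨a, [], rfl⟩, fun i => ?_⟩
            have h2 : (cel a b)^(1+i) * g = (cel a b)^i * (cel a b * g) := by
              rw [Nat.add_comm, pow_succ, mul_assoc]
            rw [h2, stabA ha hb _ ⟨a, [], hcg⟩ i, hcg]
          · by_cases haz : a * z = 1
            · have hcg : nf (cel a b * g) = t' := by
                rw [nf_cel_mul, hnf]; simp [hby, haz]
              have hlen : (nf (cel a b * g)).length ≤ N := by
                rw [hcg]
                have := hg
                rw [hnf] at this
                simp only [List.length_cons] at this ⊢
                omega
              obtain ⟨j₀, v, hv, hiter⟩ := ih (cel a b * g) hlen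
              refine ⟨j₀ + 1, v, hv, fun i => ?_⟩
              have h2 : (cel a b)^(j₀+1+i) * g = (cel a b)^(j₀+i) * (cel a b * g) := by
                rw [show j₀+1+i = (j₀+i)+1 by omega, pow_succ, mul_assoc]
              rw [h2, hiter i]
            · have hcg : nf (cel a b * g) = Sum.inl (a*z) :: t' := by
                rw [nf_cel_mul, hnf]; simp [hby, haz]
              refine ⟨1, Sum.inl (a*z) :: t', Or.inr ⟨_, _, rfl⟩, fun i => ?_⟩
              have h2 : (cel a b)^(1+i) * g = (cel a b)^i * (cel a b * g) := by
                rw [Nat.add_comm, pow_succ, mul_assoc]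
              rw [h2, stabA ha hb _ ⟨_, _, hcg⟩ i, hcg]
        · have hcg : nf (cel a b * g) = Sum.inl a :: Sum.inr (b*y) :: t := by
            rw [nf_cel_mul, hnf]; simp [hby, ha]
          refine ⟨1, Sum.inl a :: Sum.inr (b*y) :: t, Or.inr ⟨_, _, rfl⟩, fun i => ?_⟩
          have h2 : (cel a b)^(1+i) * g = (cel a b)^i * (cel a b * g) := by
            rw [Nat.add_comm, pow_succ, mul_assoc]
          rw [h2, stabA ha hb _ ⟨_, _, hcg⟩ i, hcg]

theorem reachQ (ha : a ≠ 1) (hb : b ≠ 1) :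
    ∀ (N : ℕ) (g : Monoid.Coprod A B), (nf g).length ≤ N →
    ∃ (j₀ : ℕ) (v : List (Letter A B)),
      (v = [] ∨ ∃ y t, v = Sum.inr y :: t) ∧
      ∀ i, nf ((cel a b)⁻¹ ^ (j₀ + i) * g) = Qw a b i ++ v := by
  intro N
  induction N with
  | zero =>
    intro g hg
    have hgnil : nf g = [] := List.length_eq_zero_iff.1 (Nat.le_zero.1 hg)
    have hg1 : g = 1 := nf_injective (by rw [hgnil, nf_one])
    exact ⟨0, [], Or.inl rfl, fun i => by
      rw [hg1, mul_one, Nat.zero_add, nf_cel_inv_pow ha hb, List.append_nil]⟩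
  | succ N ih =>
    intro g hg
    rcases hnf : nf g with _ | ⟨x, t⟩
    · have hg1 : g = 1 := nf_injective (by rw [hnf, nf_one])
      exact ⟨0, [], Or.inl rfl, fun i => by
        rw [hg1, mul_one, Nat.zero_add, nf_cel_inv_pow ha hb, List.append_nil]⟩
    · rcases x with y | y
      · have hred : Red (Sum.inl y :: t) := hnf ▸ red_nf g
        by_cases hay : a⁻¹ * y = 1
        · rcases hred.after_inl with rfl | ⟨z, t', rfl⟩
          · have hcg : nf ((cel a b)⁻¹ * g) = [Sum.inr b⁻¹] := by
              rw [nf_cel_inv_mul, hnf]; simp [hay, inv_ne_one.2 hb]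
            refine ⟨1, [Sum.inr b⁻¹], Or.inr ⟨b⁻¹, [], rfl⟩, fun i => ?_⟩
            have h2 : (cel a b)⁻¹^(1+i) * g = (cel a b)⁻¹^i * ((cel a b)⁻¹ * g) := by
              rw [Nat.add_comm, pow_succ, mul_assoc]
            rw [h2, stabQ ha hb _ ⟨b⁻¹, [], hcg⟩ i, hcg]
          · by_cases hbz : b⁻¹ * z = 1
            · have hcg : nf ((cel a b)⁻¹ * g) = t' := by
                rw [nf_cel_inv_mul, hnf]; simp [hay, hbz]
              have hlen : (nf ((cel a b)⁻¹ * g)).length ≤ N := by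
                rw [hcg]
                have := hg
                rw [hnf] at this
                simp only [List.length_cons] at this ⊢
                omega
              obtain ⟨j₀, v, hv, hiter⟩ := ih ((cel a b)⁻¹ * g) hlen
              refine ⟨j₀ + 1, v, hv, fun i => ?_⟩
              have h2 : (cel a b)⁻¹^(j₀+1+i) * g = (cel a b)⁻¹^(j₀+i) * ((cel a b)⁻¹ * g) := by
                rw [show j₀+1+i = (j₀+i)+1 by omega, pow_succ, mul_assoc]
              rw [h2, hiter i]
            · have hcg : nf ((cel a b)⁻¹ * g) = Sum.inr (b⁻¹*z) :: t' := by
                rw [nf_cel_inv_mul, hnf]; simp [hay, hbz]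
              refine ⟨1, Sum.inr (b⁻¹*z) :: t', Or.inr ⟨_, _, rfl⟩, fun i => ?_⟩
              have h2 : (cel a b)⁻¹^(1+i) * g = (cel a b)⁻¹^i * ((cel a b)⁻¹ * g) := by
                rw [Nat.add_comm, pow_succ, mul_assoc]
              rw [h2, stabQ ha hb _ ⟨_, _, hcg⟩ i, hcg]
        · have hcg : nf ((cel a b)⁻¹ * g) = Sum.inr b⁻¹ :: Sum.inl (a⁻¹*y) :: t := by
            rw [nf_cel_inv_mul, hnf]; simp [hay, inv_ne_one.2 hb]
          refine ⟨1, Sum.inr b⁻¹ :: Sum.inl (a⁻¹*y) :: t, Or.inr ⟨_, _, rfl⟩, fun i => ?_⟩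
          have h2 : (cel a b)⁻¹^(1+i) * g = (cel a b)⁻¹^i * ((cel a b)⁻¹ * g) := by
            rw [Nat.add_comm, pow_succ, mul_assoc]
          rw [h2, stabQ ha hb _ ⟨_, _, hcg⟩ i, hcg]
      · exact ⟨0, nf g, Or.inr ⟨y, t, hnf⟩, fun i => by
          rw [Nat.zero_add]; exact stabQ ha hb g ⟨y, t, hnf⟩ i⟩

/-! ### Auxiliary facts -/

theorem length_ri (w : List (Letter A B)) : (ri w).length = w.length := by simp [ri]

theorem linv_linv (x : Letter A B) : linv (linv x) = x := by
  rcases x with y | y <;> simp [linv]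

theorem ri_ri (w : List (Letter A B)) : ri (ri w) = w := by
  induction w with
  | nil => rfl
  | cons x t ih => rw [ri_cons, ri_append, ih, ri_cons]; simp [linv_linv, ri]

theorem cel_pow_ne_one (ha : a ≠ 1) (hb : b ≠ 1) (i : ℕ) (hi : i ≠ 0) :
    (cel a b) ^ i ≠ 1 := by
  intro hcontra
  have h1 := nf_cel_pow ha hb i
  rw [hcontra, nf_one] at h1
  have := congrArg List.length h1
  simp only [List.length_nil, length_Pw] at this
  omega

theorem cel_zpow_ne_one (ha : a ≠ 1) (hb : b ≠ 1) (k : ℤ) (hk : k ≠ 0) :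
    (cel a b) ^ k ≠ 1 := by
  rcases lt_or_gt_of_ne hk with h | h
  · intro hcontra
    have h2 : (cel a b) ^ (-k) = 1 := by rw [zpow_neg, hcontra, inv_one]
    rw [show -k = ((-k).toNat : ℤ) by omega, zpow_natCast] at h2
    exact cel_pow_ne_one ha hb _ (by omega) h2
  · intro hcontra
    rw [show k = (k.toNat : ℤ) by omega, zpow_natCast] at hcontra
    exact cel_pow_ne_one ha hb _ (by omega) hcontra

/-! ### The main lemma -/

theorem mainPos (ha : a ≠ 1) (hb : b ≠ 1) (hb2 : b * b ≠ 1) (g : Monoid.Coprod A B)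
    (k l : ℤ) (hk : 0 < k) (E : g * (cel a b) ^ k = (cel a b) ^ l * g) :
    ∃ e : ℤ, g = (cel a b) ^ e := by
  set c := cel a b with hc
  have iter : ∀ j : ℕ, g * c ^ ((j:ℤ)*k) = c ^ ((j:ℤ)*l) * g := by
    intro j
    induction j with
    | zero => simp
    | succ j ih =>
      have h1 : (((j:ℕ)+1:ℕ):ℤ)*k = (j:ℤ)*k + k := by push_cast; ring
      have h2 : (((j:ℕ)+1:ℕ):ℤ)*l = (j:ℤ)*l + l := by push_cast; ring
      rw [h1, h2, zpow_add, zpow_add, ← mul_assoc, ih, mul_assoc, E, ← mul_assoc]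
  obtain ⟨j₁, u, hu, hQ⟩ := reachQ ha hb (nf g⁻¹).length g⁻¹ le_rfl
  have hRight : ∀ N : ℕ, j₁ ≤ N → nf (g * c ^ N) = ri u ++ Pw a b (N - j₁) := by
    intro N hN
    have h1 : (g * c ^ N)⁻¹ = (c⁻¹) ^ (j₁ + (N - j₁)) * g⁻¹ := by
      rw [mul_inv_rev, ← inv_pow]
      congr 2
      omega
    have h2 : nf (g * c ^ N) = ri (nf ((g * c ^ N)⁻¹)) := by rw [nf_inv, ri_ri]
    rw [h2, h1, hQ (N - j₁), ri_append, ri_Qw]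
  set knat := k.toNat with hkn
  have hknat : (knat : ℤ) = k := Int.toNat_of_nonneg hk.le
  have hknat1 : 1 ≤ knat := by omega
  have hNpow : ∀ j : ℕ, c ^ ((j:ℤ)*k) = c ^ (j*knat) := by
    intro j
    rw [← hknat, show (j:ℤ) * (knat:ℤ) = ((j*knat : ℕ) : ℤ) by push_cast; ring, zpow_natCast]
  rcases lt_trichotomy l 0 with hl | hl | hl
  · -- l < 0 : impossible
    exfalso
    set lnat := (-l).toNat with hln
    have hlnat : (lnat : ℤ) = -l := Int.toNat_of_nonneg (by omega)
    have hlnat1 : 1 ≤ lnat := by omega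
    obtain ⟨j₂, v, hv, hQ'⟩ := reachQ ha hb (nf g).length g le_rfl
    have hj : ∃ j : ℕ, j = j₁ + j₂ + u.length + 2 := ⟨_, rfl⟩
    obtain ⟨j, hj⟩ := hj
    set M := j * lnat with hM
    set N := j * knat with hN
    have hjM : j ≤ M := Nat.le_mul_of_pos_right _ (by omega)
    have hjN : j ≤ N := Nat.le_mul_of_pos_right _ (by omega)
    have hMpow : c ^ ((j:ℤ)*l) = (c⁻¹) ^ M := by
      have h0 : (j:ℤ)*l = -((M:ℕ):ℤ) := by
        rw [hM]
        push_cast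
        rw [hlnat]
        ring
      rw [h0, zpow_neg, zpow_natCast, inv_pow]
    have hEq : (c⁻¹) ^ M * g = g * c ^ N := by
      have h0 := iter j
      rw [hNpow j, hMpow] at h0
      exact h0.symm
    have hstar : Qw a b (M - j₂) ++ v = ri u ++ Pw a b (N - j₁) := by
      have h1 : nf ((c⁻¹) ^ M * g) = Qw a b (M - j₂) ++ v := by
        have h2 := hQ' (M - j₂)
        rwa [show j₂ + (M - j₂) = M by omega] at h2
      have h2 := hRight N (by omega)
      rw [← hEq] at h2
      exact h1.symm.trans h2
    have hstar2 : (Qw a b (M - j₂) ++ v).drop u.length = Pw a b (N - j₁) := by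
      have h3 := congrArg (List.drop u.length) hstar
      rw [show u.length = (ri u).length by rw [length_ri], List.drop_left, length_ri] at h3
      exact h3
    have hNj1 : 1 ≤ N - j₁ := by omega
    have hMj2 : u.length + 2 ≤ 2 * (M - j₂) := by omega
    rcases Nat.even_or_odd u.length with ⟨s, hs⟩ | ⟨s, hs⟩
    · -- u.length even
      have h4 : (Qw a b (M - j₂) ++ v).drop u.length = Qw a b (M - j₂ - s) ++ v := by
        rw [show u.length = 2*s by omega,
          show Qw a b (M - j₂) = Qw a b s ++ Qw a b (M - j₂ - s) by
            rw [← Qw_add]; congr 1; omega,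
          List.append_assoc, show 2*s = (Qw a b s).length by simp, List.drop_left]
      rw [h4] at hstar2
      have h5 : 1 ≤ M - j₂ - s := by omega
      rw [show M - j₂ - s = (M - j₂ - s - 1) + 1 by omega, Qw_succ,
        show N - j₁ = (N - j₁ - 1) + 1 by omega, Pw_succ] at hstar2
      simp at hstar2
    · -- u.length odd
      have h4 : (Qw a b (M - j₂) ++ v).drop u.length
          = Sum.inl a⁻¹ :: (Qw a b (M - j₂ - s - 1) ++ v) := by
        rw [show u.length = 2*s + 1 by omega,
          show Qw a b (M - j₂) = Qw a b s ++ Qw a b (M - j₂ - s) by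
            rw [← Qw_add]; congr 1; omega,
          List.append_assoc, show 2*s + 1 = (Qw a b s).length + 1 by simp, List.drop_length_add_append,
          show M - j₂ - s = (M - j₂ - s - 1) + 1 by omega, Qw_succ]
        rfl
      rw [h4] at hstar2
      have h5 : 1 ≤ M - j₂ - s - 1 := by omega
      rw [show M - j₂ - s - 1 = (M - j₂ - s - 2) + 1 by omega, Qw_succ,
        show N - j₁ = (N - j₁ - 1) + 1 by omega, Pw_succ] at hstar2
      -- heads : inl a⁻¹ = inl a, then inr b⁻¹ = inr b
      simp only [List.cons_append, List.cons.injEq, Sum.inl.injEq, Sum.inr.injEq] at hstar2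
      obtain ⟨-, h7, -⟩ := hstar2
      exact hb2 (mul_eq_one_iff_eq_inv.2 h7.symm)
  · -- l = 0 : impossible
    exfalso
    rw [hl, zpow_zero, one_mul] at E
    exact cel_zpow_ne_one ha hb k hk.ne' (mul_left_cancel (E.trans (mul_one g).symm))
  · -- l > 0 : main case
    set lnat := l.toNat with hln
    have hlnat : (lnat : ℤ) = l := Int.toNat_of_nonneg hl.le
    have hlnat1 : 1 ≤ lnat := by omega
    obtain ⟨j₀, v, hv, hP⟩ := reachA ha hb (nf g).length g le_rfl
    have hj : ∃ j : ℕ, j = j₀ + j₁ + u.length + 1 := ⟨_, rfl⟩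
    obtain ⟨j, hj⟩ := hj
    set M := j * lnat with hM
    set N := j * knat with hN
    have hjM : j ≤ M := Nat.le_mul_of_pos_right _ (by omega)
    have hjN : j ≤ N := Nat.le_mul_of_pos_right _ (by omega)
    have hMpow : c ^ ((j:ℤ)*l) = c ^ M := by
      rw [← hlnat, show (j:ℤ) * (lnat:ℤ) = ((j*lnat : ℕ) : ℤ) by push_cast; ring, zpow_natCast]
    have hEq : c ^ M * g = g * c ^ N := by
      have h0 := iter j
      rw [hNpow j, hMpow] at h0
      exact h0.symm
    have hstar : Pw a b (M - j₀) ++ v = ri u ++ Pw a b (N - j₁) := by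
      have h1 : nf (c ^ M * g) = Pw a b (M - j₀) ++ v := by
        have h2 := hP (M - j₀)
        rwa [show j₀ + (M - j₀) = M by omega] at h2
      have h2 := hRight N (by omega)
      rw [← hEq] at h2
      exact h1.symm.trans h2
    have hlen : 2*(M - j₀) + v.length = u.length + 2*(N - j₁) := by
      have h3 := congrArg List.length hstar
      simp only [List.length_append, length_Pw, length_ri] at h3
      omega
    have hdle : u.length ≤ 2*(M - j₀) := by omega
    set d := 2*(M - j₀) - u.length with hd
    have hv2 : v = (Pw a b (N - j₁)).drop d := by
      have h3 := congrArg (List.drop (2*(M - j₀))) hstar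
      have hL : (Pw a b (M - j₀) ++ v).drop (2*(M - j₀)) = v := by
        rw [← length_Pw a b (M - j₀), List.drop_left]
      have hR : (ri u ++ Pw a b (N - j₁)).drop (2*(M - j₀)) = (Pw a b (N - j₁)).drop d := by
        rw [show 2*(M - j₀) = (ri u).length + d by rw [length_ri]; omega, List.drop_length_add_append]
      rw [hL, hR] at h3
      exact h3
    have hdv : d + v.length = 2*(N - j₁) := by omega
    rcases Nat.even_or_odd d with ⟨s, hs⟩ | ⟨s, hs⟩
    · -- d even : v = Pw e, done
      have hvP : v = Pw a b (N - j₁ - s) := by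
        rw [hv2, show d = 2*s by omega, dropPw' a b s (N - j₁) (by omega)]
      have hval : nf (c ^ j₀ * g) = Pw a b (N - j₁ - s) := by
        have h4 := hP 0
        rw [Nat.add_zero, Pw_zero, List.nil_append] at h4
        rw [h4, hvP]
      have h5 : c ^ j₀ * g = c ^ (N - j₁ - s) := nf_injective (by rw [hval, nf_cel_pow ha hb])
      refine ⟨((N - j₁ - s : ℕ) : ℤ) - (j₀:ℤ), ?_⟩
      have h6 : g = (c ^ j₀)⁻¹ * c ^ (N - j₁ - s) := by
        rw [← h5, ← mul_assoc, inv_mul_cancel, one_mul]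
      rw [h6, ← zpow_natCast c j₀, ← zpow_natCast c (N - j₁ - s), ← zpow_neg, ← zpow_add]
      congr 1
      ring
    · -- d odd : contradiction
      exfalso
      have hvP : v = Sum.inr b :: Pw a b (N - j₁ - s - 1) := by
        rw [hv2, show d = 2*s + 1 by omega, dropPw_odd' a b s (N - j₁) (by omega)]
      rcases hv with rfl | ⟨y, t, hyt⟩
      · exact List.cons_ne_nil _ _ hvP.symm
      · rw [hyt] at hvP
        simp at hvP

theorem main (ha : a ≠ 1) (hb : b ≠ 1) (hb2 : b * b ≠ 1) (g : Monoid.Coprod A B)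
    (k l : ℤ) (hk : k ≠ 0) (E : g * (cel a b) ^ k = (cel a b) ^ l * g) :
    ∃ e : ℤ, g = (cel a b) ^ e := by
  rcases lt_or_gt_of_ne hk with h | h
  · have h1 : (cel a b) ^ l = g * (cel a b) ^ k * g⁻¹ := by rw [E]; group
    have h2 : (cel a b) ^ (-l) = g * (cel a b) ^ (-k) * g⁻¹ := by
      rw [zpow_neg, zpow_neg, h1]; group
    have E' : g * (cel a b) ^ (-k) = (cel a b) ^ (-l) * g := by rw [h2]; group
    exact mainPos ha hb hb2 g (-k) (-l) (by omega) E'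
  · exact mainPos ha hb hb2 g k l h E

end Malnorm

open Malnorm in
/-- In the free product `Γ = (ℤ/nℤ) ∗ (ℤ/mℤ)` (with `n ≥ 2`, `m ≥ 3` prime), the
element `ab` (product of the canonical generators) has infinite order and the cyclic
subgroup `⟨ab⟩` is malnormal in `Γ`. -/
theorem stmt5 (n m : ℕ) (hn : 2 ≤ n) (hm : Nat.Prime m) (hm3 : 3 ≤ m) :
    let Γ := Monoid.Coprod (Multiplicative (ZMod n)) (Multiplicative (ZMod m))
    let a : Γ := Monoid.Coprod.inl (Multiplicative.ofAdd (1 : ZMod n))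
    let b : Γ := Monoid.Coprod.inr (Multiplicative.ofAdd (1 : ZMod m))
    ¬ IsOfFinOrder (a * b) ∧
    ∀ g : Γ, g ∉ Subgroup.zpowers (a * b) →
      ∀ h ∈ Subgroup.zpowers (a * b), g * h * g⁻¹ ∈ Subgroup.zpowers (a * b) → h = 1 := by
  intro Γ a b
  haveI : Fact (1 < n) := ⟨by omega⟩
  haveI : Fact (1 < m) := ⟨by omega⟩
  letI : DecidableEq (Multiplicative (ZMod n)) := Classical.decEq _
  letI : DecidableEq (Multiplicative (ZMod m)) := Classical.decEq _
  have ha : (Multiplicative.ofAdd (1 : ZMod n)) ≠ 1 := by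
    intro hcon
    exact one_ne_zero (ofAdd_eq_one.1 hcon)
  have hbne : (Multiplicative.ofAdd (1 : ZMod m)) ≠ 1 := by
    intro hcon
    exact one_ne_zero (ofAdd_eq_one.1 hcon)
  have hb2 : (Multiplicative.ofAdd (1 : ZMod m)) * (Multiplicative.ofAdd (1 : ZMod m)) ≠ 1 := by
    intro hcon
    have h1 : ((1 : ZMod m) + 1) = 0 := by
      have := hcon
      rw [← ofAdd_add] at this
      exact ofAdd_eq_one.1 this
    have h2 : ((2 : ℕ) : ZMod m) = 0 := by push_cast; linear_combination h1
    have h3 : m ∣ 2 := (ZMod.natCast_eq_zero_iff 2 m).1 h2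
    have := Nat.le_of_dvd (by norm_num) h3
    omega
  have hab : (a * b : Γ)
      = cel (Multiplicative.ofAdd (1 : ZMod n)) (Multiplicative.ofAdd (1 : ZMod m)) := rfl
  constructor
  · intro hfin
    obtain ⟨i, hi, hpow⟩ := isOfFinOrder_iff_pow_eq_one.1 hfin
    rw [hab] at hpow
    exact cel_pow_ne_one ha hbne i hi.ne' hpow
  · intro g hg h hh hconj
    obtain ⟨kk, hkk⟩ := Subgroup.mem_zpowers_iff.1 hh
    by_cases hk0 : kk = 0
    · rw [← hkk, hk0, zpow_zero]
    · exfalso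
      obtain ⟨ll, hll⟩ := Subgroup.mem_zpowers_iff.1 hconj
      rw [← hkk] at hll
      have E : g * (a*b) ^ kk = (a*b) ^ ll * g := by rw [hll, inv_mul_cancel_right]
      rw [hab] at E
      obtain ⟨e, rfl⟩ := main ha hbne hb2 g kk ll hk0 E
      exact hg (Subgroup.mem_zpowers_iff.2 ⟨e, by rw [hab]⟩)
end

section
/- Let Γ be a group and Γ₀ ≤ Γ a subgroup of infinite index. Then for every finite subset F of the coset space Γ/Γ₀ there exists g ∈ Γ such that (g • F) ∩ F = ∅, where g acts on Γ/Γ₀ by left translation. -/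
open scoped Pointwise

lemma stab_not_finiteIndex {Γ : Type*} [Group Γ] (Γ₀ : Subgroup Γ) [Infinite (Γ ⧸ Γ₀)]
    (x : Γ ⧸ Γ₀) : ¬ (MulAction.stabilizer Γ x).FiniteIndex := by
  intro h
  have e := MulAction.orbitEquivQuotientStabilizer Γ x
  have horb : MulAction.orbit Γ x = Set.univ := MulAction.orbit_eq_univ Γ x
  have hinf : Infinite (MulAction.orbit Γ x) := by
    rw [horb]; exact Set.infinite_univ.to_subtype
  have : Infinite (Γ ⧸ MulAction.stabilizer Γ x) := Equiv.infinite_iff e |>.mp hinf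
  haveI := @Subgroup.finite_quotient_of_finiteIndex Γ _ (MulAction.stabilizer Γ x) h
  exact not_finite (Γ ⧸ MulAction.stabilizer Γ x)

/-- If `Γ₀` has infinite index in `Γ`, then for every finite subset `F` of `Γ/Γ₀`
there is `g ∈ Γ` with `(g • F) ∩ F = ∅`. -/
theorem stmt6 {Γ : Type*} [Group Γ] (Γ₀ : Subgroup Γ) [Infinite (Γ ⧸ Γ₀)]
    (F : Finset (Γ ⧸ Γ₀)) :
    ∃ g : Γ, ∀ x ∈ F, g • x ∉ F := by
  classical
  by_contra hcon
  push_neg at hcon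
  -- for each pair p = (x, y), choose a translating element if one exists
  set ι := (Γ ⧸ Γ₀) × (Γ ⧸ Γ₀)
  have hg : ∀ p : ι, ∃ g : Γ, g • p.1 = p.2 := fun p =>
    MulAction.exists_smul_eq Γ p.1 p.2
  choose g₀ hg₀ using hg
  set H : ι → Subgroup Γ := fun p => MulAction.stabilizer Γ p.1
  have hcovers : ⋃ p ∈ F ×ˢ F, (g₀ p) • ((H p : Subgroup Γ) : Set Γ) = Set.univ := by
    rw [Set.eq_univ_iff_forall]
    intro g
    obtain ⟨x, hx, hgx⟩ := hcon g
    refine Set.mem_biUnion (Finset.mk_mem_product hx hgx) ?_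
    rw [mem_leftCoset_iff, SetLike.mem_coe, MulAction.mem_stabilizer_iff,
      mul_smul, inv_smul_eq_iff, hg₀ ⟨x, g • x⟩]
  obtain ⟨p, _, hfi⟩ := Subgroup.exists_finiteIndex_of_leftCoset_cover hcovers
  exact stab_not_finiteIndex Γ₀ p.1 hfi
end

section
/- For a group Λ, the following are equivalent: (1) the FC-radical of Λ is torsion-free, i.e., every element of Λ that has a finite conjugacy class and finite order is the identity; (2) whenever K ≤ Λ is a finite subgroup and H ≤ Λ is a subgroup of finite index with K ≤ H and K normal in H, then K = {e}. -/
private lemma conj_eq_conj_iff {G : Type*} [Group G] (x a b : G) :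
    a * x * a⁻¹ = b * x * b⁻¹ ↔ x * (a⁻¹ * b) = (a⁻¹ * b) * x := by
  constructor <;> intro h
  · have := congrArg (fun z => a⁻¹ * z * b) h
    simpa [mul_assoc] using this
  · have := congrArg (fun z => a * z * b⁻¹) h
    simpa [mul_assoc] using this

/-- For a group `Λ`, the FC-radical of `Λ` is torsion free if and only if the only
finite subgroup `K ≤ Λ` that is normal in some finite-index subgroup `H ≤ Λ` is the
trivial subgroup. -/
theorem stmt7 {Λ : Type*} [Group Λ] :
    (∀ x : Λ, ({y : Λ | IsConj x y}).Finite → IsOfFinOrder x → x = 1) ↔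
    (∀ K H : Subgroup Λ, (K : Set Λ).Finite → H.index ≠ 0 → K ≤ H →
      (∀ h ∈ H, ∀ k ∈ K, h * k * h⁻¹ ∈ K) → K = ⊥) := by
  constructor
  · intro hfc K H hKfin hidx hKH hnorm
    rw [eq_bot_iff]
    intro k hk
    have hQ : Finite (Λ ⧸ H) := (Nat.card_ne_zero.mp hidx).2
    rw [Subgroup.mem_bot]
    apply hfc k
    · -- the conjugacy class of k is finite
      apply Set.Finite.subset
        (Set.finite_iUnion fun q : Λ ⧸ H =>
          hKfin.image fun z => q.out * z * q.out⁻¹)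
      intro y hy
      obtain ⟨g, hg⟩ := isConj_iff.mp hy
      refine Set.mem_iUnion.mpr ⟨QuotientGroup.mk g, ?_⟩
      have hout : ((QuotientGroup.mk g : Λ ⧸ H).out : Λ)⁻¹ * g ∈ H := by
        have := Quotient.out_eq (QuotientGroup.mk g : Λ ⧸ H)
        exact QuotientGroup.eq.mp this
      set r := (QuotientGroup.mk g : Λ ⧸ H).out with hr
      refine ⟨(r⁻¹ * g) * k * (r⁻¹ * g)⁻¹, hnorm _ hout _ hk, ?_⟩
      rw [← hg]
      simp [mul_assoc]
    · -- k has finite order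
      haveI : Finite (K : Set Λ) := hKfin.to_subtype
      have := isOfFinOrder_of_finite (⟨k, hk⟩ : K)
      obtain ⟨n, hn, h1⟩ := (isOfFinOrder_iff_pow_eq_one).mp this
      refine (isOfFinOrder_iff_pow_eq_one).mpr ⟨n, hn, ?_⟩
      have : ((⟨k, hk⟩ : K) ^ n : K) = (1 : K) := h1
      simpa [Subtype.ext_iff] using this
  · intro h x hfin hord
    have hx : x ∈ Subgroup.zpowers x := Subgroup.mem_zpowers x
    haveI : Finite {y : Λ | IsConj x y} := hfin.to_subtype
    have hwd : ∀ a b : Λ, @Setoid.r _ (QuotientGroup.leftRel (Subgroup.centralizer {x})) a b →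
        (⟨a * x * a⁻¹, isConj_iff.mpr ⟨a, rfl⟩⟩ : {y : Λ | IsConj x y}) =
        ⟨b * x * b⁻¹, isConj_iff.mpr ⟨b, rfl⟩⟩ := by
      intro a b hab
      rw [QuotientGroup.leftRel_apply] at hab
      have := Subgroup.mem_centralizer_iff.mp hab x rfl
      exact Subtype.ext ((conj_eq_conj_iff x a b).mpr this)
    let f : Λ ⧸ Subgroup.centralizer {x} → {y : Λ | IsConj x y} :=
      Quotient.lift (fun g => ⟨g * x * g⁻¹, isConj_iff.mpr ⟨g, rfl⟩⟩) hwd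
    have hinj : Function.Injective f := by
      intro q₁ q₂ hq
      induction q₁ using Quotient.inductionOn with | h a =>
      induction q₂ using Quotient.inductionOn with | h b =>
      have : a * x * a⁻¹ = b * x * b⁻¹ := Subtype.ext_iff.mp hq
      show (QuotientGroup.mk a : Λ ⧸ Subgroup.centralizer {x}) = QuotientGroup.mk b
      rw [QuotientGroup.eq]
      exact Subgroup.mem_centralizer_iff.mpr fun g hg => by
        rw [Set.mem_singleton_iff] at hg
        rw [hg]
        exact (conj_eq_conj_iff x a b).mp this
    haveI : Finite (Λ ⧸ Subgroup.centralizer {x}) := Finite.of_injective f hinj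
    have hbot := h (Subgroup.zpowers x) (Subgroup.centralizer {x})
      hord.finite_zpowers Subgroup.index_ne_zero_of_finite
      (Subgroup.zpowers_le.mpr (Subgroup.mem_centralizer_iff.mpr fun g hg => by
        rw [Set.mem_singleton_iff] at hg; rw [hg]))
      (fun h hH k hkK => by
        obtain ⟨n, rfl⟩ := hkK
        have hc : Commute h x := (Subgroup.mem_centralizer_iff.mp hH x rfl).symm
        have : h * x ^ n * h⁻¹ = x ^ n := by
          rw [(hc.zpow_right n).eq, mul_inv_cancel_right]
        rw [this]
        exact ⟨n, rfl⟩)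
    rw [hbot, Subgroup.mem_bot] at hx
    exact hx
end

section
/- Let (Z,η) be a probability space, S : Z → Z an ergodic measure-preserving transformation, H a separable complex Hilbert space, and U a unitary operator on H such that ⟨Uⁿx, y⟩ → 0 as n → ∞ for all x, y ∈ H. If F : Z → H is a strongly measurable function satisfying F(S z) = U(F(z)) for almost every z ∈ Z, then F(z) = 0 for almost every z ∈ Z. -/
open MeasureTheory Filter Topology

/-- Let `S` be an ergodic measure-preserving transformation of a probability space
`(Z, η)`, `H` a separable complex Hilbert space, `U` a unitary on `H` that is mixing
(`⟨Uⁿ x, y⟩ → 0` for all `x, y`). If `F : Z → H` is strongly measurable with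
`F(Sz) = U(F z)` a.e., then `F = 0` a.e. -/
theorem stmt8 {Z : Type*} [MeasurableSpace Z] (η : Measure Z) [IsProbabilityMeasure η]
    (S : Z → Z) (hS : Ergodic S η)
    {H : Type*} [NormedAddCommGroup H] [InnerProductSpace ℂ H] [CompleteSpace H]
    [TopologicalSpace.SeparableSpace H]
    (U : H →L[ℂ] H) (hU : U ∈ unitary (H →L[ℂ] H))
    (hmix : ∀ x y : H, Tendsto (fun n : ℕ => (inner ℂ ((U ^ n) x) y : ℂ)) atTop (𝓝 0))
    (F : Z → H) (hF : StronglyMeasurable F)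
    (hFeq : ∀ᵐ z ∂η, F (S z) = U (F z)) :
    ∀ᵐ z ∂η, F z = 0 := by
  by_contra hcon
  have hSmp : MeasurePreserving S η η := hS.toMeasurePreserving
  -- unitaries preserve norm
  have hUn : ∀ n : ℕ, U ^ n ∈ unitary (H →L[ℂ] H) := fun n => pow_mem hU n
  have hnorm : ∀ (n : ℕ) (v : H), ‖(U ^ n) v‖ = ‖v‖ := fun n v =>
    ContinuousLinearMap.norm_map_of_mem_unitary (hUn n) v
  -- iterate the equivariance
  have hFeqn : ∀ n : ℕ, ∀ᵐ z ∂η, F (S^[n] z) = (U ^ n) (F z) := by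
    intro n
    induction n with
    | zero => filter_upwards with z; simp
    | succ n ih =>
      have h1 : ∀ᵐ z ∂η, F (S^[n] (S z)) = (U ^ n) (F (S z)) :=
        hSmp.quasiMeasurePreserving.ae ih
      filter_upwards [h1, hFeq] with z h1 h2
      rw [Function.iterate_succ_apply, h1, h2, pow_succ]
      rfl
  -- the set where F ≠ 0 has positive measure
  have h0 : η {z | F z ≠ 0} ≠ 0 := by
    intro h
    exact hcon (by simpa [ae_iff] using h)
  -- find k with positive measure of δ < ‖F z‖ < M
  have hsub : {z | F z ≠ 0} ⊆ ⋃ k : ℕ,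
      {z | ((k : ℝ) + 1)⁻¹ < ‖F z‖ ∧ ‖F z‖ < (k : ℝ) + 1} := by
    intro z hz
    have hpos : 0 < ‖F z‖ := norm_pos_iff.mpr hz
    obtain ⟨k, hk⟩ := exists_nat_gt (max (‖F z‖⁻¹) ‖F z‖)
    have hk1 : ‖F z‖⁻¹ < (k : ℝ) := lt_of_le_of_lt (le_max_left _ _) hk
    have hk2 : ‖F z‖ < (k : ℝ) := lt_of_le_of_lt (le_max_right _ _) hk
    refine Set.mem_iUnion.2 ⟨k, ?_, by linarith⟩
    have : ((k : ℝ) + 1)⁻¹ < (‖F z‖⁻¹)⁻¹ := by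
      apply inv_strictAnti₀ (by positivity) (by linarith)
    simpa [inv_inv] using this
  obtain ⟨k, hk0⟩ : ∃ k : ℕ,
      η {z | ((k : ℝ) + 1)⁻¹ < ‖F z‖ ∧ ‖F z‖ < (k : ℝ) + 1} ≠ 0 := by
    by_contra h
    push_neg at h
    exact h0 (measure_mono_null hsub (by simpa using measure_iUnion_null h))
  set δ : ℝ := ((k : ℝ) + 1)⁻¹ with hδ
  set M : ℝ := (k : ℝ) + 1 with hM
  have hδpos : 0 < δ := by positivity
  have hM1 : (1 : ℝ) ≤ M := by simp [hM]
  set ε : ℝ := δ ^ 2 / (3 * (M + 1)) with hε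
  have hεpos : 0 < ε := by positivity
  have hδ1 : δ ≤ 1 := by
    rw [hδ]
    rw [inv_le_one_iff₀]
    right; linarith
  have hε1 : ε ≤ 1 := by
    rw [hε]
    rw [div_le_one (by positivity)]
    nlinarith
  -- cover by balls around points of a countable dense set
  obtain ⟨t, htc, htd⟩ := TopologicalSpace.exists_countable_dense H
  have hsub2 : {z | δ < ‖F z‖ ∧ ‖F z‖ < M} ⊆
      ⋃ x ∈ t, {z | δ < ‖F z‖ ∧ ‖F z‖ < M ∧ dist (F z) x < ε} := by
    intro z hz
    obtain ⟨x, hxb, hxt⟩ := Metric.dense_iff.mp htd (F z) ε hεpos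
    rw [Metric.mem_ball] at hxb
    exact Set.mem_biUnion hxt ⟨hz.1, hz.2, by rw [dist_comm]; exact hxb⟩
  obtain ⟨x, hxt, hx0⟩ : ∃ x ∈ t,
      η {z | δ < ‖F z‖ ∧ ‖F z‖ < M ∧ dist (F z) x < ε} ≠ 0 := by
    by_contra h
    push_neg at h
    refine hk0 (measure_mono_null hsub2 ?_)
    exact (measure_biUnion_null_iff htc).mpr h
  set A : Set Z := {z | δ < ‖F z‖ ∧ ‖F z‖ < M ∧ dist (F z) x < ε} with hA
  -- A is measurable
  have hgm : Measurable fun z => ‖F z‖ := hF.norm.measurable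
  have hdm : Measurable fun z => dist (F z) x :=
    (continuous_id.dist continuous_const).comp_stronglyMeasurable hF |>.measurable
  have hAm : MeasurableSet A := by
    have : A = (fun z => ‖F z‖) ⁻¹' (Set.Ioi δ) ∩
        ((fun z => ‖F z‖) ⁻¹' (Set.Iio M) ∩ (fun z => dist (F z) x) ⁻¹' (Set.Iio ε)) := by
      ext z; simp [hA, and_assoc]
    rw [this]
    exact (hgm measurableSet_Ioi).inter
      ((hgm measurableSet_Iio).inter (hdm measurableSet_Iio))
  -- mixing gives an N beyond which the inner product is small
  have hmx := hmix x x
  rw [Metric.tendsto_atTop] at hmx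
  obtain ⟨N, hN⟩ := hmx (δ ^ 2 / 3) (by positivity)
  -- Poincaré recurrence
  obtain ⟨n, hnN, hn0⟩ :=
    (hSmp.conservative).exists_gt_measure_inter_ne_zero hAm.nullMeasurableSet hx0 N
  -- find a point in the intersection where the equivariance holds
  have hae := hFeqn n
  obtain ⟨z, hzA, hzeq⟩ : ∃ z, z ∈ A ∩ S^[n] ⁻¹' A ∧ F (S^[n] z) = (U ^ n) (F z) := by
    by_contra h
    push_neg at h
    refine hn0 (measure_mono_null ?_ (by simpa [ae_iff] using hae))
    intro z hz
    simpa using h z hz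
  obtain ⟨hz1, hz2⟩ := hzA
  -- the estimates
  set v : H := F z with hv
  set w : H := F (S^[n] z) with hw
  have hz2' : S^[n] z ∈ A := hz2
  have hvx : dist v x < ε := hz1.2.2
  have hwx : dist w x < ε := hz2'.2.2
  have hvM : ‖v‖ < M := hz1.2.1
  have hwδ : δ < ‖w‖ := hz2'.1
  have hxM : ‖x‖ ≤ M + ε := by
    have h1 : ‖x‖ - ‖v‖ ≤ ‖x - v‖ := norm_sub_norm_le x v
    have h2 : ‖x - v‖ = dist v x := by rw [← dist_eq_norm, dist_comm]
    linarith
  have hweq : w = (U ^ n) v := hzeq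
  -- decompose the inner product
  have hdecomp : (inner ℂ ((U ^ n) x) x : ℂ) =
      inner ℂ ((U ^ n) (x - v)) x + inner ℂ ((U ^ n) v) (x - w) + inner ℂ ((U ^ n) v) w := by
    rw [map_sub, inner_sub_left, inner_sub_right]
    ring
  have hT3 : ‖(inner ℂ ((U ^ n) v) w : ℂ)‖ = ‖w‖ ^ 2 := by
    rw [← hweq, inner_self_eq_norm_sq_to_K, norm_pow]
    simp
  have hT1 : ‖(inner ℂ ((U ^ n) (x - v)) x : ℂ)‖ ≤ ε * (M + ε) := by
    calc ‖(inner ℂ ((U ^ n) (x - v)) x : ℂ)‖ ≤ ‖(U ^ n) (x - v)‖ * ‖x‖ := norm_inner_le_norm _ _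
      _ = ‖x - v‖ * ‖x‖ := by rw [hnorm]
      _ ≤ ε * (M + ε) := by
          apply mul_le_mul _ hxM (norm_nonneg _) (le_of_lt hεpos)
          rw [← dist_eq_norm] at *
          rw [dist_comm] at hvx
          linarith
  have hT2 : ‖(inner ℂ ((U ^ n) v) (x - w) : ℂ)‖ ≤ M * ε := by
    calc ‖(inner ℂ ((U ^ n) v) (x - w) : ℂ)‖ ≤ ‖(U ^ n) v‖ * ‖x - w‖ := norm_inner_le_norm _ _
      _ = ‖v‖ * ‖x - w‖ := by rw [hnorm]
      _ ≤ M * ε := by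
          apply mul_le_mul (le_of_lt hvM) _ (norm_nonneg _) (by linarith)
          rw [← dist_eq_norm, dist_comm]
          linarith
  have hNn : ‖(inner ℂ ((U ^ n) x) x : ℂ)‖ < δ ^ 2 / 3 := by
    have := hN n (le_of_lt hnN)
    simpa [dist_eq_norm] using this
  have key : ‖w‖ ^ 2 ≤ ‖(inner ℂ ((U ^ n) x) x : ℂ)‖ + (ε * (M + ε) + M * ε) := by
    rw [← hT3]
    calc ‖(inner ℂ ((U ^ n) v) w : ℂ)‖
        = ‖(inner ℂ ((U ^ n) x) x : ℂ) - inner ℂ ((U ^ n) (x - v)) x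
            - inner ℂ ((U ^ n) v) (x - w)‖ := by rw [hdecomp]; ring_nf
      _ ≤ ‖(inner ℂ ((U ^ n) x) x : ℂ)‖ + ‖(inner ℂ ((U ^ n) (x - v)) x : ℂ)‖
            + ‖(inner ℂ ((U ^ n) v) (x - w) : ℂ)‖ := by
          apply le_trans (norm_sub_le _ _)
          gcongr
          exact norm_sub_le _ _
      _ ≤ _ := by linarith
  -- final contradiction
  have hεM : ε * (M + ε) + M * ε ≤ 2 * δ ^ 2 / 3 := by
    have : ε * (M + ε) + M * ε ≤ ε * (2 * (M + 1)) := by nlinarith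
    calc ε * (M + ε) + M * ε ≤ ε * (2 * (M + 1)) := this
      _ = 2 * δ ^ 2 / 3 := by rw [hε]; field_simp
  have hδw : δ ^ 2 < ‖w‖ ^ 2 := by nlinarith
  have hc : ‖w‖ ^ 2 < δ ^ 2 := by
    calc ‖w‖ ^ 2 ≤ ‖(inner ℂ ((U ^ n) x) x : ℂ)‖ + (ε * (M + ε) + M * ε) := key
      _ < δ ^ 2 / 3 + 2 * δ ^ 2 / 3 := by
          apply add_lt_add_of_lt_of_le hNn hεM
      _ = δ ^ 2 := by ring
  linarith
end

section
/- Let G be a group acting on a countable set S, let (H_s)_{s∈S} be a family of complex Hilbert spaces, and let H = ⊕_{s∈S} H_s be their Hilbert direct sum. Let ρ be a unitary representation of G on H such that for every g ∈ G and s ∈ S, ρ_g maps the summand H_s onto the summand H_{g•s}. Suppose (ξ_n) is a sequence of unit vectors in H with ‖ρ_g(ξ_n) − ξ_n‖ → 0 as n → ∞, for every g ∈ G. Define p_n : S → [0,∞) by p_n(s) = ‖P_s(ξ_n)‖², where P_s is the orthogonal projection of H onto H_s. Then each p_n satisfies Σ_{s∈S} p_n(s) = 1, and for every g ∈ G one has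 Σ_{s∈S} | p_n(g⁻¹ • s) − p_n(s) | → 0 as n → ∞. -/
open Filter Topology ENNReal

section aux

variable {S : Type*} {H : S → Type*} [∀ s, NormedAddCommGroup (H s)]
  [∀ s, InnerProductSpace ℂ (H s)]

private lemma two_toReal_pos : 0 < (2 : ℝ≥0∞).toReal := by norm_num

/-- Evaluation at a point as a continuous linear map on `lp H 2`. -/
private noncomputable def evalCLM' (s : S) : lp H 2 →L[ℂ] H s :=
  LinearMap.mkContinuous
    { toFun := fun f => f s
      map_add' := fun f g => rfl
      map_smul' := fun c f => rfl }
    1 (fun f => by rw [one_mul]; exact lp.norm_apply_le_norm (by norm_num) f s)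

private lemma cauchy_schwarz_l2 (u v : lp H 2) :
    Summable (fun s => ‖u s‖ * ‖v s‖) ∧ ∑' s, ‖u s‖ * ‖v s‖ ≤ ‖u‖ * ‖v‖ := by
  have mem : ∀ w : lp H 2, Memℓp (fun s => (‖w s‖ : ℝ)) 2 := by
    intro w
    apply memℓp_gen
    have := (lp.memℓp w).summable two_toReal_pos
    simpa using this
  set a : lp (fun _ : S => ℝ) 2 := ⟨fun s => ‖u s‖, mem u⟩
  set b : lp (fun _ : S => ℝ) 2 := ⟨fun s => ‖v s‖, mem v⟩
  have hna : ‖a‖ = ‖u‖ := by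
    rw [lp.norm_eq_tsum_rpow two_toReal_pos, lp.norm_eq_tsum_rpow two_toReal_pos u]
    congr 1
    apply tsum_congr
    intro s
    simp [a]
  have hnb : ‖b‖ = ‖v‖ := by
    rw [lp.norm_eq_tsum_rpow two_toReal_pos, lp.norm_eq_tsum_rpow two_toReal_pos v]
    congr 1
    apply tsum_congr
    intro s
    simp [b]
  have hinner : HasSum (fun s => ‖u s‖ * ‖v s‖) (inner ℝ a b : ℝ) := by
    convert lp.hasSum_inner (𝕜 := ℝ) a b using 2
    · rfl
    · simp [a, b, mul_comm]
  refine ⟨hinner.summable, ?_⟩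
  rw [hinner.tsum_eq, ← hna, ← hnb]
  exact real_inner_le_norm a b

/-- The `ℓ¹` comparison of the squared-norm densities of two vectors. -/
private lemma l1_bound (u v : lp H 2) :
    ∑' s, |‖u s‖ ^ 2 - ‖v s‖ ^ 2| ≤ (‖u‖ + ‖v‖) * ‖u - v‖ := by
  have key : ∀ s, |‖u s‖ ^ 2 - ‖v s‖ ^ 2| ≤
      ‖u s‖ * ‖(u - v) s‖ + ‖v s‖ * ‖(u - v) s‖ := by
    intro s
    have h1 : (u - v) s = u s - v s := by rw [lp.coeFn_sub]; rfl
    have h2 : |‖u s‖ - ‖v s‖| ≤ ‖u s - v s‖ := abs_norm_sub_norm_le _ _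
    have h3 : |‖u s‖ ^ 2 - ‖v s‖ ^ 2| = (‖u s‖ + ‖v s‖) * |‖u s‖ - ‖v s‖| := by
      rw [sq_sub_sq, abs_mul, abs_of_nonneg (by positivity)]
    rw [h3, h1]
    calc (‖u s‖ + ‖v s‖) * |‖u s‖ - ‖v s‖|
        ≤ (‖u s‖ + ‖v s‖) * ‖u s - v s‖ := by
          apply mul_le_mul_of_nonneg_left h2 (by positivity)
      _ = ‖u s‖ * ‖u s - v s‖ + ‖v s‖ * ‖u s - v s‖ := by ring
  obtain ⟨hs1, hb1⟩ := cauchy_schwarz_l2 u (u - v)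
  obtain ⟨hs2, hb2⟩ := cauchy_schwarz_l2 v (u - v)
  calc ∑' s, |‖u s‖ ^ 2 - ‖v s‖ ^ 2|
      ≤ ∑' s, (‖u s‖ * ‖(u - v) s‖ + ‖v s‖ * ‖(u - v) s‖) := by
        apply Summable.tsum_le_tsum key
        · apply Summable.of_nonneg_of_le (fun s => abs_nonneg _) key (hs1.add hs2)
        · exact hs1.add hs2
    _ = (∑' s, ‖u s‖ * ‖(u - v) s‖) + ∑' s, ‖v s‖ * ‖(u - v) s‖ := Summable.tsum_add hs1 hs2
    _ ≤ ‖u‖ * ‖u - v‖ + ‖v‖ * ‖u - v‖ := add_le_add hb1 hb2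
    _ = (‖u‖ + ‖v‖) * ‖u - v‖ := by ring

private lemma summable_abs_sq (u v : lp H 2) :
    Summable (fun s => |‖u s‖ ^ 2 - ‖v s‖ ^ 2|) := by
  have h1 := (lp.memℓp u).summable two_toReal_pos
  have h2 := (lp.memℓp v).summable two_toReal_pos
  have h1' : Summable fun s => ‖u s‖ ^ 2 := by
    convert h1 using 2 with s
    rw [show ((2:ℝ≥0∞).toReal) = ((2:ℕ):ℝ) by norm_num, Real.rpow_natCast]
  have h2' : Summable fun s => ‖v s‖ ^ 2 := by
    convert h2 using 2 with s
    rw [show ((2:ℝ≥0∞).toReal) = ((2:ℕ):ℝ) by norm_num, Real.rpow_natCast]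
  exact (h1'.sub h2').abs

end aux
private lemma norm_apply_rho {S : Type*} {H : S → Type*} [∀ s, NormedAddCommGroup (H s)]
    [∀ s, InnerProductSpace ℂ (H s)] {G : Type*} [Group G] [MulAction G S]
    (ρ : G →* (lp H 2 ≃ₗᵢ[ℂ] lp H 2))
    (hρ : ∀ (g : G) (s : S),
      ⇑(ρ g) '' {ξ : lp H 2 | ∀ t, t ≠ s → ξ t = 0}
        = {ξ : lp H 2 | ∀ t, t ≠ g • s → ξ t = 0})
    (g : G) (ξ : lp H 2) (s : S) : ‖(ρ g ξ) s‖ = ‖ξ (g⁻¹ • s)‖ := by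
  classical
  have hvan : ∀ (t : S) (a : H t) (u : S), u ≠ g • t → (ρ g (lp.single 2 t a)) u = 0 := by
    intro t a u hu
    have hmem : lp.single 2 t a ∈ {ζ : lp H 2 | ∀ w, w ≠ t → ζ w = 0} := fun w hw =>
      lp.single_apply_ne 2 t a hw
    have : ρ g (lp.single 2 t a) ∈ {ζ : lp H 2 | ∀ w, w ≠ g • t → ζ w = 0} := by
      rw [← hρ g t]; exact Set.mem_image_of_mem _ hmem
    exact this u hu
  have hnorm : ∀ (t : S) (a : H t), ‖(ρ g (lp.single 2 t a)) (g • t)‖ = ‖a‖ := by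
    intro t a
    set η := ρ g (lp.single 2 t a) with hηdef
    have hη' : η = lp.single 2 (g • t) (η (g • t)) := by
      ext u
      rcases eq_or_ne u (g • t) with h | h
      · subst h; rw [lp.single_apply_self]
      · rw [lp.single_apply_ne 2 _ _ h]; exact hvan t a u h
    have h1 : ‖η‖ = ‖η (g • t)‖ := by
      conv_lhs => rw [hη']
      exact lp.norm_single (by norm_num) (g • t) (η (g • t))
    have h2 : ‖η‖ = ‖a‖ := by
      rw [hηdef, (ρ g).norm_map]
      have := lp.norm_single (E := H) (p := 2) (by norm_num) t a
      exact this
    rw [← h1, h2]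
  have hsum : HasSum (fun t : S => lp.single 2 t (ξ t)) ξ :=
    lp.hasSum_single (by norm_num) ξ
  have hsum2 : HasSum (fun t : S => ρ g (lp.single 2 t (ξ t))) (ρ g ξ) := by
    have := hsum.mapL ((ρ g).toContinuousLinearEquiv : lp H 2 →L[ℂ] lp H 2)
    simpa using this
  have hsum3 : HasSum (fun t : S => (ρ g (lp.single 2 t (ξ t))) s) ((ρ g ξ) s) :=
    hsum2.mapL (evalCLM' s)
  have hzero : ∀ t : S, t ≠ g⁻¹ • s → (ρ g (lp.single 2 t (ξ t))) s = 0 := by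
    intro t ht
    apply hvan
    intro h
    exact ht (by rw [h, inv_smul_smul])
  have heq : (ρ g ξ) s = (ρ g (lp.single 2 (g⁻¹ • s) (ξ (g⁻¹ • s)))) s :=
    hsum3.unique (hasSum_single (g⁻¹ • s) hzero)
  rw [heq]
  have h := hnorm (g⁻¹ • s) (ξ (g⁻¹ • s))
  rwa [smul_inv_smul] at h

/-- Let `G` act on a countable set `S` and let `ρ` be a unitary representation of `G` on
the Hilbert direct sum `H = ⊕_{s ∈ S} H_s` permuting the summands accordingly
(`ρ_g (H_s) = H_{g • s}`). If `(ξ_n)` is a sequence of unit vectors with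
`‖ρ_g ξ_n − ξ_n‖ → 0` for all `g`, then the probability densities
`p_n(s) = ‖P_s ξ_n‖²` on `S` are asymptotically `G`-invariant in `ℓ¹`. -/
theorem stmt12 {G S : Type*} [Group G] [Countable S] [MulAction G S]
    (H : S → Type*) [∀ s, NormedAddCommGroup (H s)] [∀ s, InnerProductSpace ℂ (H s)]
    (ρ : G →* (lp H 2 ≃ₗᵢ[ℂ] lp H 2))
    (hρ : ∀ (g : G) (s : S),
      ⇑(ρ g) '' {ξ : lp H 2 | ∀ t, t ≠ s → ξ t = 0}
        = {ξ : lp H 2 | ∀ t, t ≠ g • s → ξ t = 0})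
    (ξ : ℕ → lp H 2) (hξ : ∀ n, ‖ξ n‖ = 1)
    (hconv : ∀ g : G, Tendsto (fun n => ‖ρ g (ξ n) - ξ n‖) atTop (𝓝 0)) :
    (∀ n, HasSum (fun s => ‖(ξ n) s‖ ^ 2) 1) ∧
    (∀ g : G, Tendsto (fun n => ∑' s, |‖(ξ n) (g⁻¹ • s)‖ ^ 2 - ‖(ξ n) s‖ ^ 2|)
      atTop (𝓝 0)) := by
  have e : ∀ x : ℝ, x ^ (2 : ℝ≥0∞).toReal = x ^ 2 := fun x => by
    rw [show ((2 : ℝ≥0∞).toReal) = ((2 : ℕ) : ℝ) by norm_num, Real.rpow_natCast]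
  constructor
  · intro n
    have h := lp.hasSum_norm two_toReal_pos (ξ n)
    simp only [e] at h
    rwa [hξ n, one_pow] at h
  · intro g
    have hbound : ∀ n, ∑' s, |‖(ξ n) (g⁻¹ • s)‖ ^ 2 - ‖(ξ n) s‖ ^ 2|
        ≤ 2 * ‖ρ g (ξ n) - ξ n‖ := by
      intro n
      calc ∑' s, |‖(ξ n) (g⁻¹ • s)‖ ^ 2 - ‖(ξ n) s‖ ^ 2|
          = ∑' s, |‖(ρ g (ξ n)) s‖ ^ 2 - ‖(ξ n) s‖ ^ 2| :=
            tsum_congr fun s => by rw [norm_apply_rho ρ hρ g (ξ n) s]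
        _ ≤ (‖ρ g (ξ n)‖ + ‖ξ n‖) * ‖ρ g (ξ n) - ξ n‖ := l1_bound _ _
        _ = 2 * ‖ρ g (ξ n) - ξ n‖ := by rw [(ρ g).norm_map, hξ n]; ring
    have h0 : ∀ n, 0 ≤ ∑' s, |‖(ξ n) (g⁻¹ • s)‖ ^ 2 - ‖(ξ n) s‖ ^ 2| := fun n =>
      tsum_nonneg fun s => abs_nonneg _
    have hlim : Tendsto (fun n => 2 * ‖ρ g (ξ n) - ξ n‖) atTop (𝓝 0) := by
      simpa using (hconv g).const_mul 2
    exact squeeze_zero h0 hbound hlim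
end

section
/- Let G be a group acting on countable sets S and S', and let θ : S' → S be a G-equivariant surjection all of whose fibers θ⁻¹({s}) are finite. For a probability density p on S, define Φ(p) : S' → [0,∞) by Φ(p)(x) = p(θ(x)) / card(θ⁻¹({θ(x)})). Then: (1) Φ(p) is a probability density on S'; (2) Φ is G-equivariant, i.e., Φ(g·p) = g·Φ(p) for all g ∈ G; (3) Φ is an ℓ¹-isometry, i.e., Σ_{x∈S'} |Φ(p)(x) − Φ(q)(x)| = Σ_{s∈S} |p(s) − q(s)| for all probability densities p, q on S. -/
/-- The map `Φ` induced by a `G`-equivariant finite-to-one surjection `θ : S' → S`,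
sending a probability density `p` on `S` to the density
`Φ(p)(x) = p(θ x) / card (θ⁻¹{θ x})` on `S'`. -/
noncomputable def densityLift {S S' : Type*} (θ : S' → S) (p : S → ℝ) (x : S') : ℝ :=
  p (θ x) / (θ ⁻¹' {θ x}).ncard

lemma densityLift_hasSum {S S' : Type*} (θ : S' → S)
    (hθsurj : Function.Surjective θ) (hfib : ∀ s : S, (θ ⁻¹' {s}).Finite)
    (f : S → ℝ) (hf : ∀ s, 0 ≤ f s) {r : ℝ} (h : HasSum f r) :
    HasSum (densityLift θ f) r := by
  have hn : ∀ s : S, 0 < ((θ ⁻¹' {s}).ncard : ℝ) := by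
    intro s
    obtain ⟨x, hx⟩ := hθsurj s
    have : 0 < (θ ⁻¹' {s}).ncard :=
      (Set.ncard_pos (hfib s)).2 ⟨x, by simp [hx]⟩
    exact_mod_cast this
  rw [← (Equiv.sigmaFiberEquiv θ).hasSum_iff]
  set F : (Σ s : S, {x : S' // θ x = s}) → ℝ :=
    fun y => densityLift θ f ((Equiv.sigmaFiberEquiv θ) y) with hF
  have hfiber : ∀ s : S, HasSum (fun c : {x : S' // θ x = s} => F ⟨s, c⟩) (f s) := by
    intro s
    haveI : Fintype {x : S' // θ x = s} := (hfib s).fintype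
    have hconst : ∀ c : {x : S' // θ x = s},
        F ⟨s, c⟩ = f s / ((θ ⁻¹' {s}).ncard : ℝ) := by
      intro c
      show f (θ c.1) / ((θ ⁻¹' {θ c.1}).ncard : ℝ) = _
      rw [c.2]
    have hcard : ((θ ⁻¹' {s}).ncard : ℝ) = (Fintype.card {x : S' // θ x = s} : ℝ) := by
      norm_cast
      rw [← Nat.card_coe_set_eq]
      exact Nat.card_eq_fintype_card (α := {x : S' // θ x = s})
    have hs : ∑ c : {x : S' // θ x = s}, F ⟨s, c⟩ = f s := by
      rw [Finset.sum_congr rfl (fun c _ => hconst c), Finset.sum_const, Finset.card_univ,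
        nsmul_eq_mul, ← hcard, mul_div_cancel₀ _ (hn s).ne']
    have := hasSum_fintype (fun c : {x : S' // θ x = s} => F ⟨s, c⟩)
    rwa [hs] at this
  have hFnn : ∀ y, 0 ≤ F y := fun y => div_nonneg (hf _) (Nat.cast_nonneg _)
  have hsummable : Summable F := by
    rw [summable_sigma_of_nonneg hFnn]
    refine ⟨fun s => (hfiber s).summable, ?_⟩
    have : (fun s => ∑' c : {x : S' // θ x = s}, F ⟨s, c⟩) = f := by
      funext s; exact (hfiber s).tsum_eq
    rw [this]
    exact h.summable
  exact HasSum.sigma_of_hasSum h hfiber hsummable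

/-- Let `G` act on countable sets `S` and `S'` and let `θ : S' → S` be a `G`-equivariant
surjection with finite fibers. Then `Φ = densityLift θ` maps probability densities on `S`
to probability densities on `S'`, is `G`-equivariant, and is an `ℓ¹`-isometry. -/
theorem stmt13 {G S S' : Type*} [Group G] [Countable S] [Countable S']
    [MulAction G S] [MulAction G S']
    (θ : S' → S) (hθeq : ∀ (g : G) (x : S'), θ (g • x) = g • θ x)
    (hθsurj : Function.Surjective θ)
    (hfib : ∀ s : S, (θ ⁻¹' {s}).Finite) :
    (∀ p : S → ℝ, (∀ s, 0 ≤ p s) → HasSum p 1 →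
      (∀ x, 0 ≤ densityLift θ p x) ∧ HasSum (densityLift θ p) 1) ∧
    (∀ (p : S → ℝ) (g : G),
      densityLift θ (fun s => p (g⁻¹ • s)) = fun x => densityLift θ p (g⁻¹ • x)) ∧
    (∀ p q : S → ℝ, (∀ s, 0 ≤ p s) → HasSum p 1 → (∀ s, 0 ≤ q s) → HasSum q 1 →
      ∑' x, |densityLift θ p x - densityLift θ q x| = ∑' s, |p s - q s|) := by
  have hncard : ∀ (g : G) (s : S), (θ ⁻¹' {g • s}).ncard = (θ ⁻¹' {s}).ncard := by
    intro g s
    have himg : θ ⁻¹' {g • s} = (fun x : S' => g • x) '' (θ ⁻¹' {s}) := by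
      ext x
      simp only [Set.mem_preimage, Set.mem_singleton_iff, Set.mem_image]
      constructor
      · intro hx
        refine ⟨g⁻¹ • x, ?_, by simp⟩
        simp [hθeq, hx]
      · rintro ⟨y, hy, rfl⟩
        simp [hθeq, hy]
    rw [himg, Set.ncard_image_of_injective _ (MulAction.injective g)]
  refine ⟨?_, ?_, ?_⟩
  · intro p hp hsum
    exact ⟨fun x => div_nonneg (hp _) (Nat.cast_nonneg _),
      densityLift_hasSum θ hθsurj hfib p hp hsum⟩
  · intro p g
    funext x
    simp only [densityLift, hθeq]
    rw [show θ x = g • (g⁻¹ • θ x) by simp, hncard g (g⁻¹ • θ x)]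
    simp
  · intro p q hp hsump hq hsumq
    have habs : ∀ x, |densityLift θ p x - densityLift θ q x|
        = densityLift θ (fun s => |p s - q s|) x := by
      intro x
      simp only [densityLift, ← sub_div, abs_div, abs_of_nonneg (Nat.cast_nonneg
        ((θ ⁻¹' {θ x}).ncard) : (0:ℝ) ≤ _)]
    have hsummable : Summable (fun s => |p s - q s|) := by
      apply Summable.of_nonneg_of_le (fun s => abs_nonneg _)
        (fun s => (abs_sub _ _).trans_eq (by rw [abs_of_nonneg (hp s), abs_of_nonneg (hq s)]))
      exact (hsump.summable.add hsumq.summable)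
    have h := densityLift_hasSum θ hθsurj hfib (fun s => |p s - q s|)
      (fun s => abs_nonneg _) hsummable.hasSum
    calc ∑' x, |densityLift θ p x - densityLift θ q x|
        = ∑' x, densityLift θ (fun s => |p s - q s|) x := by simp_rw [habs]
      _ = ∑' s, |p s - q s| := h.tsum_eq
end

section
/- Let G be a group acting on a countable set S. Suppose there exists a sequence (p_n) of probability densities on S such that for every g ∈ G, Σ_{s∈S} |p_n(g⁻¹ • s) − p_n(s)| → 0 as n → ∞. Then there exists a G-invariant mean on S, i.e., a linear functional m on the space of bounded real-valued functions on S such that m(f) ≥ 0 whenever f ≥ 0, m(1) = 1, and m(g·f) = m(f) for all g ∈ G and all bounded f, where (g·f)(s) = f(g⁻¹ • s). -/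
open Filter Topology BoundedContinuousFunction
open scoped BoundedContinuousFunction

/-- If a group `G` acting on a countable set `S` admits a sequence of probability
densities `p_n` on `S` with `Σ_s |p_n(g⁻¹ • s) − p_n(s)| → 0` for every `g ∈ G`,
then there is a `G`-invariant mean on `S` (a positive, unital, `G`-invariant linear
functional on the bounded real-valued functions on `S`). -/
theorem stmt14 {G S : Type*} [Group G] [Countable S] [MulAction G S]
    [TopologicalSpace S] [DiscreteTopology S]
    (p : ℕ → S → ℝ) (hpos : ∀ n s, 0 ≤ p n s) (hsum : ∀ n, HasSum (p n) 1)
    (hinv : ∀ g : G,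
      Tendsto (fun n => ∑' s, |p n (g⁻¹ • s) - p n s|) atTop (𝓝 0)) :
    ∃ m : (S →ᵇ ℝ) →ₗ[ℝ] ℝ,
      (∀ f : S →ᵇ ℝ, (∀ s, 0 ≤ f s) → 0 ≤ m f) ∧
      m 1 = 1 ∧
      (∀ (g : G) (f : S →ᵇ ℝ),
        m (f.compContinuous ⟨fun s => g⁻¹ • s, continuous_of_discreteTopology⟩) = m f) := by
  classical
  obtain ⟨U, hU⟩ : ∃ U : Ultrafilter ℕ, (U : Filter ℕ) ≤ (atTop : Filter ℕ) :=
    ⟨Ultrafilter.of atTop, Ultrafilter.of_le _⟩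
  have hps : ∀ n, Summable (p n) := fun n => (hsum n).summable
  -- general summability lemma
  have hsum2 : ∀ (q : S → ℝ), Summable q → (f : S →ᵇ ℝ) → Summable (fun s => q s * f s) := by
    intro q hq f
    apply Summable.of_norm_bounded (hq.norm.mul_right ‖f‖)
    intro s
    rw [norm_mul]
    exact mul_le_mul_of_nonneg_left (f.norm_coe_le_norm s) (norm_nonneg _)
  have hsummable : ∀ (f : S →ᵇ ℝ) (n : ℕ), Summable (fun s => p n s * f s) :=
    fun f n => hsum2 (p n) (hps n) f
  have hbound : ∀ (f : S →ᵇ ℝ) (n : ℕ), |∑' s, p n s * f s| ≤ ‖f‖ := by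
    intro f n
    have h1 : |∑' s, p n s * f s| ≤ ∑' s, |p n s * f s| := by
      simpa [abs_mul] using norm_tsum_le_tsum_norm (hsummable f n).norm
    have h2 : ∑' s, |p n s * f s| ≤ ∑' s, p n s * ‖f‖ := by
      refine Summable.tsum_le_tsum ?_ (hsummable f n).abs ((hps n).mul_right ‖f‖)
      intro s
      rw [abs_mul, abs_of_nonneg (hpos n s)]
      exact mul_le_mul_of_nonneg_left (f.norm_coe_le_norm s) (hpos n s)
    have h3 : ∑' s, p n s * ‖f‖ = ‖f‖ := by
      rw [tsum_mul_right, (hsum n).tsum_eq, one_mul]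
    linarith
  have hlim : ∀ f : S →ᵇ ℝ,
      ∃ x : ℝ, Tendsto (fun n => ∑' s, p n s * f s) (U : Filter ℕ) (𝓝 x) := by
    intro f
    have hmem : (Ultrafilter.map (fun n => ∑' s, p n s * f s) U : Filter ℝ) ≤
        Filter.principal (Set.Icc (-‖f‖) ‖f‖) := by
      rw [le_principal_iff]
      refine Filter.mem_map.mpr (Filter.univ_mem' ?_)
      intro n
      have := abs_le.mp (hbound f n)
      exact Set.mem_Icc.mpr this
    obtain ⟨x, -, hx⟩ := (isCompact_Icc (a := -‖f‖) (b := ‖f‖)).ultrafilter_le_nhds _ hmem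
    exact ⟨x, hx⟩
  choose L hL using hlim
  refine ⟨{ toFun := L, map_add' := ?_, map_smul' := ?_ }, ?_, ?_, ?_⟩
  · intro f g
    refine tendsto_nhds_unique (hL (f + g)) ?_
    refine ((hL f).add (hL g)).congr fun n => ?_
    rw [← Summable.tsum_add (hsummable f n) (hsummable g n)]
    congr 1
    funext s
    simp [mul_add]
  · intro c f
    simp only [RingHom.id_apply, smul_eq_mul]
    refine tendsto_nhds_unique (hL (c • f)) ?_
    refine ((hL f).const_mul c).congr fun n => ?_
    rw [← tsum_mul_left]
    congr 1
    funext s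
    simp [smul_eq_mul]
    ring
  · intro f hf
    refine ge_of_tendsto' (hL f) fun n => ?_
    exact tsum_nonneg fun s => mul_nonneg (hpos n s) (hf s)
  · refine tendsto_nhds_unique (hL 1) ?_
    refine tendsto_const_nhds.congr fun n => ?_
    rw [← (hsum n).tsum_eq]
    congr 1
    funext s
    simp
  · intro g f
    set f' : S →ᵇ ℝ :=
      f.compContinuous ⟨fun s => g⁻¹ • s, continuous_of_discreteTopology⟩ with hf'
    have hf'app : ∀ s, f' s = f (g⁻¹ • s) := fun s => rfl
    -- rewrite the mean of f' via reindexing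
    have hq : ∀ n, Summable (fun t => p n (g • t)) := by
      intro n
      exact ((MulAction.toPerm g : Equiv.Perm S).summable_iff (f := p n)).mpr (hps n)
    have hreindex : ∀ n, (∑' s, p n s * f' s) = ∑' t, p n (g • t) * f t := by
      intro n
      have := ((MulAction.toPerm g : Equiv.Perm S).tsum_eq (f := fun s => p n s * f' s))
      rw [← this]
      congr 1
      funext t
      simp only [MulAction.toPerm_apply, hf'app, inv_smul_smul]
    have hqsum : ∀ n, Summable (fun t => p n (g • t) * f t) := by
      intro n
      exact hsum2 _ (hq n) f
    have hdsum : ∀ n, Summable (fun t => |p n (g • t) - p n t|) :=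
      fun n => ((hq n).sub (hps n)).abs
    have hdiffbound : ∀ n,
        |(∑' s, p n s * f' s) - ∑' s, p n s * f s| ≤ (∑' t, |p n (g • t) - p n t|) * ‖f‖ := by
      intro n
      rw [hreindex n, ← Summable.tsum_sub (hqsum n) (hsummable f n)]
      have heq : ∀ t, p n (g • t) * f t - p n t * f t = (p n (g • t) - p n t) * f t := by
        intro t; ring
      simp only [heq]
      have hds : Summable (fun t => (p n (g • t) - p n t) * f t) :=
        ((hqsum n).sub (hsummable f n)).congr fun t => by ring
      have h1 : |∑' t, (p n (g • t) - p n t) * f t| ≤ ∑' t, |(p n (g • t) - p n t) * f t| := by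
        simpa [abs_mul] using norm_tsum_le_tsum_norm hds.norm
      have h2 : ∑' t, |(p n (g • t) - p n t) * f t| ≤ ∑' t, |p n (g • t) - p n t| * ‖f‖ := by
        refine Summable.tsum_le_tsum ?_ hds.abs ((hdsum n).mul_right ‖f‖)
        intro t
        rw [abs_mul]
        exact mul_le_mul_of_nonneg_left (f.norm_coe_le_norm t) (abs_nonneg _)
      rw [tsum_mul_right] at h2
      linarith
    have hc : Tendsto (fun n => (∑' t, |p n (g • t) - p n t|) * ‖f‖) atTop (𝓝 0) := by
      have := (hinv g⁻¹).mul_const ‖f‖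
      simpa using this
    have hdiff : Tendsto
        (fun n => (∑' s, p n s * f' s) - ∑' s, p n s * f s) atTop (𝓝 0) :=
      squeeze_zero_norm (fun n => by simpa using hdiffbound n) hc
    have hdiffU : Tendsto
        (fun n => (∑' s, p n s * f' s) - ∑' s, p n s * f s) (U : Filter ℕ) (𝓝 0) :=
      hdiff.mono_left hU
    have : Tendsto (fun n => ∑' s, p n s * f' s) (U : Filter ℕ) (𝓝 (0 + L f)) := by
      refine (hdiffU.add (hL f)).congr fun n => ?_
      ring
    rw [zero_add] at this
    exact tendsto_nhds_unique (hL f') this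
end
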